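/- arXiv:1307.7113 — 3 statements merged into one kernel-verified Lean document; each statement's English description precedes it below -/
import Mathlib

section
/- Let Γ be a finite-index subgroup of PSL₂(ℤ), and let m be the least common multiple of the cusp widths of Γ, i.e., the least common multiple over all g ∈ PSL₂(ℤ) of the least positive integer k with g·T^k·g⁻¹ ∈ Γ, where T is the image of [[1,1],[0,1]]. Then Γ is a congruence subgroup (i.e., Γ̄(N) ≤ Γ for some positive integer N) if and only if Γ̄(m) ≤ Γ. -/
/-- `SL(2, ℤ)`. -/
abbrev SL2Z := Matrix.SpecialLinearGroup (Fin 2) ℤ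

/-- `PSL₂(ℤ)`, the quotient of `SL(2, ℤ)` by its center `{±I}`. -/
abbrev PSL2Z := SL2Z ⧸ Subgroup.center SL2Z

/-- The projection `SL(2, ℤ) → PSL₂(ℤ)`. -/
def projSL : SL2Z →* PSL2Z := QuotientGroup.mk' (Subgroup.center SL2Z)

/-- `Γ̄(N)`, the image of the principal congruence subgroup `Γ(N)` in `PSL₂(ℤ)`. -/
def GammaBar (N : ℕ) : Subgroup PSL2Z := (CongruenceSubgroup.Gamma N).map projSL

/-- The matrix `A = [[1,2],[0,1]]` in `SL(2, ℤ)`. -/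
def matA : SL2Z := ⟨!![1, 2; 0, 1], by norm_num [Matrix.det_fin_two_of]⟩

/-- The matrix `B = [[1,0],[2,1]]` in `SL(2, ℤ)`. -/
def matB : SL2Z := ⟨!![1, 0; 2, 1], by norm_num [Matrix.det_fin_two_of]⟩

/-- The matrix `T = [[1,1],[0,1]]` in `SL(2, ℤ)`. -/
def matT : SL2Z := ⟨!![1, 1; 0, 1], by norm_num [Matrix.det_fin_two_of]⟩

/-- The matrix `L = [[1,0],[1,1]]` in `SL(2, ℤ)`. -/
def matL : SL2Z := ⟨!![1, 0; 1, 1], by norm_num [Matrix.det_fin_two_of]⟩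

/-- `Ā`, the image of `A` in `PSL₂(ℤ)`. -/
def Abar : PSL2Z := projSL matA

/-- `B̄`, the image of `B` in `PSL₂(ℤ)`. -/
def Bbar : PSL2Z := projSL matB


open Matrix CongruenceSubgroup

namespace Wohl

/-- Entrywise congruence of two `SL2Z` matrices modulo `n`. -/
def MCong (n : ℤ) (A B : SL2Z) : Prop := ∀ i j, n ∣ (A i j - B i j)

lemma MCong.refl (n : ℤ) (A : SL2Z) : MCong n A A := fun i j => by simp

lemma entry_mul (A C : SL2Z) (i j : Fin 2) :
    (A * C) i j = A i 0 * C 0 j + A i 1 * C 1 j := by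
  show (A * C).1 i j = _
  rw [Matrix.SpecialLinearGroup.coe_mul, Matrix.mul_apply, Fin.sum_univ_two]

lemma MCong.mul {n : ℤ} {A B C D : SL2Z} (h1 : MCong n A B) (h2 : MCong n C D) :
    MCong n (A * C) (B * D) := by
  intro i j
  rw [entry_mul, entry_mul]
  have : A i 0 * C 0 j + A i 1 * C 1 j - (B i 0 * D 0 j + B i 1 * D 1 j)
      = (A i 0 - B i 0) * C 0 j + (A i 1 - B i 1) * C 1 j
        + B i 0 * (C 0 j - D 0 j) + B i 1 * (C 1 j - D 1 j) := by ring
  rw [this]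
  exact dvd_add (dvd_add (dvd_add ((h1 i 0).mul_right _) ((h1 i 1).mul_right _))
    ((h2 0 j).mul_left _)) ((h2 1 j).mul_left _)

lemma MCong.inv {n : ℤ} {A B : SL2Z} (h : MCong n A B) : MCong n A⁻¹ B⁻¹ := by
  intro i j
  rw [Matrix.SpecialLinearGroup.SL2_inv_expl A, Matrix.SpecialLinearGroup.SL2_inv_expl B]
  fin_cases i <;> fin_cases j <;> simp only [Matrix.SpecialLinearGroup.coe_mk] <;> simp
  · exact h 1 1
  · simpa [neg_sub, ← sub_eq_neg_add] using dvd_neg.mpr (h 0 1)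
  · simpa [neg_sub, ← sub_eq_neg_add] using dvd_neg.mpr (h 1 0)
  · exact h 0 0

lemma MCong.of_dvd {n d : ℤ} (hd : d ∣ n) {A B : SL2Z} (h : MCong n A B) : MCong d A B :=
  fun i j => hd.trans (h i j)

lemma mcong_one_iff {n : ℤ} {A : SL2Z} :
    MCong n A 1 ↔ n ∣ A 0 0 - 1 ∧ n ∣ A 0 1 ∧ n ∣ A 1 0 ∧ n ∣ A 1 1 - 1 := by
  constructor
  · intro h
    refine ⟨?_, ?_, ?_, ?_⟩
    · simpa using h 0 0
    · simpa using h 0 1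
    · simpa using h 1 0
    · simpa using h 1 1
  · rintro ⟨h1, h2, h3, h4⟩ i j
    fin_cases i <;> fin_cases j <;> simp only [Matrix.SpecialLinearGroup.coe_one] <;> simpa

lemma gamma_iff_mcong {N : ℕ} {A : SL2Z} : A ∈ Gamma N ↔ MCong (N : ℤ) A 1 := by
  rw [Gamma_mem, mcong_one_iff]
  constructor
  · rintro ⟨h1, h2, h3, h4⟩
    refine ⟨?_, ?_, ?_, ?_⟩
    · rw [← ZMod.intCast_zmod_eq_zero_iff_dvd]; push_cast; rw [h1]; ring
    · rw [← ZMod.intCast_zmod_eq_zero_iff_dvd]; push_cast; rw [h2]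
    · rw [← ZMod.intCast_zmod_eq_zero_iff_dvd]; push_cast; rw [h3]
    · rw [← ZMod.intCast_zmod_eq_zero_iff_dvd]; push_cast; rw [h4]; ring
  · rintro ⟨h1, h2, h3, h4⟩
    rw [← ZMod.intCast_zmod_eq_zero_iff_dvd] at h1 h2 h3 h4
    push_cast at h1 h2 h3 h4
    exact ⟨by linear_combination h1, by linear_combination h2, by linear_combination h3,
      by linear_combination h4⟩

lemma matT_coe : (matT : Matrix (Fin 2) (Fin 2) ℤ) = !![1, 1; 0, 1] := rfl
lemma matL_coe : (matL : Matrix (Fin 2) (Fin 2) ℤ) = !![1, 0; 1, 1] := rfl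

lemma matT_eq : matT = ModularGroup.T := rfl

lemma coe_T_zpow (z : ℤ) : ((matT ^ z : SL2Z) : Matrix (Fin 2) (Fin 2) ℤ) = !![1, z; 0, 1] := by
  rw [matT_eq]; exact ModularGroup.coe_T_zpow z

lemma matL_inv_coe : ((matL⁻¹ : SL2Z) : Matrix (Fin 2) (Fin 2) ℤ) = !![1, 0; -1, 1] := by
  rw [Matrix.SpecialLinearGroup.SL2_inv_expl]
  simp [matL_coe]
  ext i j
  fin_cases i <;> fin_cases j <;> rfl

lemma coe_L_zpow (z : ℤ) : ((matL ^ z : SL2Z) : Matrix (Fin 2) (Fin 2) ℤ) = !![1, 0; z, 1] := by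
  induction' z using Int.induction_on with n h n h
  · rw [zpow_zero]; simp [Matrix.SpecialLinearGroup.coe_one, Matrix.one_fin_two]
  · rw [_root_.zpow_add, zpow_one, Matrix.SpecialLinearGroup.coe_mul, h, matL_coe, Matrix.mul_fin_two]
    ext i j
    fin_cases i <;> fin_cases j <;> simp <;> ring
  · rw [_root_.zpow_sub, zpow_one, Matrix.SpecialLinearGroup.coe_mul, h, matL_inv_coe,
      Matrix.mul_fin_two]
    ext i j
    fin_cases i <;> fin_cases j <;> simp <;> ring

/-- `S₀ = [[0,1],[-1,0]]`, expressed as a word in `T`, `L`. -/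
def matS0 : SL2Z := matT * matL⁻¹ * matT

lemma matS0_coe : (matS0 : Matrix (Fin 2) (Fin 2) ℤ) = !![0, 1; -1, 0] := by
  show ((matT * matL⁻¹ * matT : SL2Z) : Matrix (Fin 2) (Fin 2) ℤ) = _
  rw [Matrix.SpecialLinearGroup.coe_mul, Matrix.SpecialLinearGroup.coe_mul, matT_coe,
    matL_inv_coe, Matrix.mul_fin_two, Matrix.mul_fin_two]
  norm_num

lemma matS0_inv_coe : ((matS0⁻¹ : SL2Z) : Matrix (Fin 2) (Fin 2) ℤ) = !![0, -1; 1, 0] := by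
  rw [Matrix.SpecialLinearGroup.SL2_inv_expl]
  show _ = (!![0, -1; 1, 0] : Matrix (Fin 2) (Fin 2) ℤ)
  have h := matS0_coe
  ext i j
  fin_cases i <;> fin_cases j <;>
    simp only [Matrix.SpecialLinearGroup.coe_mk] <;>
    simp [show (matS0 : Matrix (Fin 2) (Fin 2) ℤ) 1 1 = 0 from by rw [h]; rfl,
      show (matS0 : Matrix (Fin 2) (Fin 2) ℤ) 0 1 = 1 from by rw [h]; rfl,
      show (matS0 : Matrix (Fin 2) (Fin 2) ℤ) 1 0 = -1 from by rw [h]; rfl,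
      show (matS0 : Matrix (Fin 2) (Fin 2) ℤ) 0 0 = 0 from by rw [h]; rfl]

/-- Conjugating `T^z` by `S₀` gives `L^{-z}`. -/
lemma S0_conj_T (z : ℤ) : matS0 * matT ^ z * matS0⁻¹ = matL ^ (-z) := by
  apply Subtype.coe_injective
  show ((matS0 * matT ^ z * matS0⁻¹ : SL2Z) : Matrix (Fin 2) (Fin 2) ℤ)
      = ((matL ^ (-z) : SL2Z) : Matrix (Fin 2) (Fin 2) ℤ)
  rw [Matrix.SpecialLinearGroup.coe_mul, Matrix.SpecialLinearGroup.coe_mul, matS0_coe,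
    coe_T_zpow, matS0_inv_coe, coe_L_zpow, Matrix.mul_fin_two, Matrix.mul_fin_two]
  norm_num

/-- `-1` as an element of the subgroup generated by `T` and `L`. -/
def negI : SL2Z := matS0 * matS0

lemma negI_coe : (negI : Matrix (Fin 2) (Fin 2) ℤ) = !![-1, 0; 0, -1] := by
  show ((matS0 * matS0 : SL2Z) : Matrix (Fin 2) (Fin 2) ℤ) = _
  rw [Matrix.SpecialLinearGroup.coe_mul, matS0_coe, Matrix.mul_fin_two]
  norm_num

/-- The subgroup of `SL2Z` generated by `T` and `L`. -/
def TL : Subgroup SL2Z := Subgroup.closure {matT, matL}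

lemma matT_mem_TL : matT ∈ TL := Subgroup.subset_closure (by simp)
lemma matL_mem_TL : matL ∈ TL := Subgroup.subset_closure (by simp)
lemma matS0_mem_TL : matS0 ∈ TL :=
  mul_mem (mul_mem matT_mem_TL (inv_mem matL_mem_TL)) matT_mem_TL
lemma negI_mem_TL : negI ∈ TL := mul_mem matS0_mem_TL matS0_mem_TL

lemma det_entries (A : SL2Z) : A 0 0 * A 1 1 - A 0 1 * A 1 0 = 1 := by
  have := A.2
  rwa [Matrix.det_fin_two] at this

lemma TL_eq_top : TL = ⊤ := by
  rw [eq_top_iff]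
  intro A _
  generalize hn : (A 1 0).natAbs = n
  induction n using Nat.strong_induction_on generalizing A with
  | _ n IH =>
  by_cases hc : (A 1 0) = 0
  · -- lower-left entry zero: A = ± a power of T
    have hdet := det_entries A
    rw [hc, mul_zero, sub_zero] at hdet
    rcases Int.mul_eq_one_iff_eq_one_or_neg_one.mp hdet with ⟨h1, h2⟩ | ⟨h1, h2⟩
    · have : A = matT ^ (A 0 1) := by
        apply Subtype.coe_injective
        show (A : Matrix (Fin 2) (Fin 2) ℤ) = ((matT ^ (A 0 1) : SL2Z) : Matrix (Fin 2) (Fin 2) ℤ)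
        rw [coe_T_zpow]
        ext i j
        fin_cases i <;> fin_cases j <;> simp [h1, h2, hc]
      rw [this]; exact zpow_mem matT_mem_TL _
    · have : A = negI * matT ^ (-(A 0 1)) := by
        apply Subtype.coe_injective
        show (A : Matrix (Fin 2) (Fin 2) ℤ) = ((negI * matT ^ (-(A 0 1)) : SL2Z) :
          Matrix (Fin 2) (Fin 2) ℤ)
        rw [Matrix.SpecialLinearGroup.coe_mul, negI_coe, coe_T_zpow, Matrix.mul_fin_two]
        ext i j
        fin_cases i <;> fin_cases j <;> simp [h1, h2, hc]
      rw [this]; exact mul_mem negI_mem_TL (zpow_mem matT_mem_TL _)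
  · -- Euclidean step
    set a := A 0 0 with ha
    set c := A 1 0 with hcdef
    set q := a / c with hq
    set A' := matS0 * matT ^ (-q) * A with hA'
    have hA'c : A' 1 0 = -(a % c) := by
      have e1 : ((matS0 * matT ^ (-q) : SL2Z) : Matrix (Fin 2) (Fin 2) ℤ)
          = !![0, 1; -1, q] := by
        rw [Matrix.SpecialLinearGroup.coe_mul, matS0_coe, coe_T_zpow, Matrix.mul_fin_two]
        norm_num
      have e3 : (A' : Matrix (Fin 2) (Fin 2) ℤ)
          = !![0, 1; -1, q] * (A : Matrix (Fin 2) (Fin 2) ℤ) := by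
        rw [hA', Matrix.SpecialLinearGroup.coe_mul, e1]
      have : A' 1 0 = -1 * A 0 0 + q * A 1 0 := by
        show (A' : Matrix (Fin 2) (Fin 2) ℤ) 1 0 = _
        rw [e3, Matrix.mul_apply, Fin.sum_univ_two]
        norm_num
      rw [this]
      have := Int.mul_ediv_add_emod a c
      linear_combination this
    have habs : a % c < |c| := by
      rcases lt_or_gt_of_ne hc with h | h
      · have h2 : a % c = a % (-c) := (Int.emod_neg a c).symm
        rw [h2, abs_of_neg h]
        exact Int.emod_lt_of_pos a (by linarith)
      · rw [abs_of_pos h]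
        exact Int.emod_lt_of_pos a h
    have hlt : (A' 1 0).natAbs < n := by
      rw [hA'c, Int.natAbs_neg, ← hn]
      have h2 := Int.natAbs_lt_natAbs_of_nonneg_of_lt (Int.emod_nonneg a hc) habs
      rwa [Int.natAbs_abs] at h2
    have hA'mem : A' ∈ TL := IH _ hlt (Subgroup.mem_top A') rfl
    have : A = (matS0 * matT ^ (-q))⁻¹ * A' := by
      rw [hA']
      group
    rw [this]
    exact mul_mem (inv_mem (mul_mem matS0_mem_TL (zpow_mem matT_mem_TL _))) hA'mem

/-- The subgroup of `SL2Z` generated by all conjugates of `T^m`. -/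
def Em (m : ℕ) : Subgroup SL2Z :=
  Subgroup.closure {x | ∃ g : SL2Z, g * matT ^ m * g⁻¹ = x}

lemma conj_zpow_mem (m : ℕ) (g : SL2Z) (z : ℤ) :
    g * matT ^ ((m : ℤ) * z) * g⁻¹ ∈ Em m := by
  have h := map_zpow (MulAut.conj g) (matT ^ (m : ℕ)) z
  simp only [MulAut.conj_apply] at h
  have h2 : matT ^ ((m : ℤ) * z) = (matT ^ (m : ℕ)) ^ z := by
    rw [← zpow_natCast matT m, ← _root_.zpow_mul]
  rw [h2, h]
  have hgen : (g * matT ^ m * g⁻¹) ∈ {x : SL2Z | ∃ g' : SL2Z, g' * matT ^ m * g'⁻¹ = x} :=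
    ⟨g, rfl⟩
  exact zpow_mem (Subgroup.subset_closure hgen) z

lemma T_zpow_mem (m : ℕ) (z : ℤ) : matT ^ ((m : ℤ) * z) ∈ Em m := by
  have := conj_zpow_mem m 1 z
  simpa using this

lemma L_zpow_mem (m : ℕ) (z : ℤ) : matL ^ ((m : ℤ) * z) ∈ Em m := by
  have h := S0_conj_T (-((m : ℤ) * z))
  rw [neg_neg] at h
  rw [← h]
  have : (-((m : ℤ) * z)) = (m : ℤ) * (-z) := by ring
  rw [this]
  exact conj_zpow_mem m matS0 (-z)

lemma Em_mono {m n : ℕ} (h : m ∣ n) : Em n ≤ Em m := by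
  apply Subgroup.closure_le (Em m) |>.mpr
  rintro x ⟨g, rfl⟩
  obtain ⟨c, rfl⟩ := h
  have h1 : matT ^ (m * c) = matT ^ ((m : ℤ) * c) := by
    rw [← zpow_natCast matT (m * c)]; push_cast; ring_nf
  rw [h1]
  exact conj_zpow_mem m g c

lemma MCong.symm {n : ℤ} {A B : SL2Z} (h : MCong n A B) : MCong n B A := by
  intro i j
  rw [← neg_sub ((A : Matrix (Fin 2) (Fin 2) ℤ) i j) ((B : Matrix (Fin 2) (Fin 2) ℤ) i j)]
  exact dvd_neg.mpr (h i j)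

lemma mcong_iff {n : ℤ} {A B : SL2Z} : MCong n A B ↔ n ∣ A 0 0 - B 0 0 ∧ n ∣ A 0 1 - B 0 1 ∧
    n ∣ A 1 0 - B 1 0 ∧ n ∣ A 1 1 - B 1 1 := by
  constructor
  · intro h; exact ⟨h 0 0, h 0 1, h 1 0, h 1 1⟩
  · rintro ⟨h1, h2, h3, h4⟩ i j; fin_cases i <;> fin_cases j <;> simpa

/-- The key refinement step: any `A ≡ 1 mod n` agrees with an element of `Em n` modulo `n²`. -/
lemma refine (n : ℕ) (hn : 0 < n) (A : SL2Z) (hA : MCong (n : ℤ) A 1) :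
    ∃ E ∈ Em n, MCong ((n : ℤ) ^ 2) (E⁻¹ * A) 1 := by
  obtain ⟨h1, h2, h3, h4⟩ := mcong_one_iff.mp hA
  obtain ⟨α, hα⟩ := h1
  obtain ⟨β, hβ⟩ := h2
  obtain ⟨γ, hγ⟩ := h3
  obtain ⟨δ, hδ⟩ := h4
  have hnz : (n : ℤ) ≠ 0 := Int.natCast_ne_zero.mpr hn.ne'
  -- `α + δ ≡ 0 (mod n)` from the determinant
  have heq : α + δ = (n : ℤ) * (β * γ - α * δ) := by
    have hdet := det_entries A
    have e0 : A 0 0 = 1 + (n : ℤ) * α := by linarith [hα]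
    have e1 : A 0 1 = (n : ℤ) * β := by linarith [hβ]
    have e2 : A 1 0 = (n : ℤ) * γ := by linarith [hγ]
    have e3 : A 1 1 = 1 + (n : ℤ) * δ := by linarith [hδ]
    rw [e0, e1, e2, e3] at hdet
    have : (n : ℤ) * (α + δ) = (n : ℤ) * ((n : ℤ) * (β * γ - α * δ)) := by ring_nf; linarith [hdet]
    exact mul_left_cancel₀ hnz this
  set x : ℤ := β - δ with hx
  set y : ℤ := γ + δ with hy
  set E : SL2Z := matT ^ ((n : ℤ) * x) * (matL * matT ^ ((n : ℤ) * δ) * matL⁻¹) *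
      matL ^ ((n : ℤ) * y) with hE
  have hEmem : E ∈ Em n := by
    refine mul_mem (mul_mem (T_zpow_mem n x) ?_) (L_zpow_mem n y)
    exact conj_zpow_mem n matL δ
  have hEcoe : (E : Matrix (Fin 2) (Fin 2) ℤ) =
      !![(1 - n*δ - n^2*x*δ) + (n*δ + n*x + n^2*x*δ) * (n*y), n*δ + n*x + n^2*x*δ;
         -(n*δ) + (1 + n*δ) * (n*y), 1 + n*δ] := by
    rw [hE]
    rw [Matrix.SpecialLinearGroup.coe_mul, Matrix.SpecialLinearGroup.coe_mul,
      Matrix.SpecialLinearGroup.coe_mul, Matrix.SpecialLinearGroup.coe_mul,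
      coe_T_zpow, coe_L_zpow, coe_T_zpow, matL_coe, matL_inv_coe]
    simp only [Matrix.mul_fin_two]
    ext i j
    fin_cases i <;> fin_cases j <;>
      simp only [Matrix.cons_val', Matrix.cons_val_zero, Matrix.cons_val_one, Matrix.head_cons,
        Matrix.head_fin_const, Matrix.empty_val', Matrix.cons_val_fin_one, Matrix.of_apply] <;>
      ring
  have hAE : MCong ((n : ℤ) ^ 2) A E := by
    rw [mcong_iff]
    refine ⟨⟨β * γ - α * δ + x * δ - y * δ - x * y - (n : ℤ) * x * y * δ, ?_⟩,
      ⟨-(x * δ), ?_⟩, ⟨-(y * δ), ?_⟩, ⟨0, ?_⟩⟩ <;>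
      rw [show ((E : Matrix (Fin 2) (Fin 2) ℤ)) = _ from hEcoe] <;>
      simp only [Matrix.cons_val', Matrix.cons_val_zero, Matrix.cons_val_one, Matrix.head_cons,
        Matrix.head_fin_const, Matrix.empty_val', Matrix.cons_val_fin_one, Matrix.of_apply]
    · linear_combination hα + (n : ℤ) * heq
    · linear_combination hβ
    · linear_combination hγ
    · linear_combination hδ
  have hfin := MCong.mul (MCong.refl ((n:ℤ)^2) E⁻¹) (MCong.symm hAE)
  rw [inv_mul_cancel] at hfin
  exact ⟨E, hEmem, hfin.symm⟩

/-- Iterating the refinement: any `A ≡ 1 mod m` agrees with an element of `Em m`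
modulo `m^(2^k)`. -/
lemma iter (m : ℕ) (hm : 0 < m) (k : ℕ) (A : SL2Z) (hA : MCong (m : ℤ) A 1) :
    ∃ E ∈ Em m, MCong ((m : ℤ) ^ (2 ^ k)) (E⁻¹ * A) 1 := by
  induction k with
  | zero =>
    refine ⟨1, one_mem _, ?_⟩
    simpa using hA
  | succ k IH =>
    obtain ⟨E, hE, hB⟩ := IH
    have hpos : 0 < m ^ (2 ^ k) := pow_pos hm _
    have hcast : ((m ^ (2 ^ k) : ℕ) : ℤ) = (m : ℤ) ^ (2 ^ k) := by push_cast; ring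
    obtain ⟨E', hE', hB'⟩ := refine (m ^ (2 ^ k)) hpos (E⁻¹ * A) (by rw [hcast]; exact hB)
    refine ⟨E * E', mul_mem hE (Em_mono (dvd_pow_self m (Nat.pos_of_ne_zero ?_).ne') hE'), ?_⟩
    · exact (Nat.pos_of_ne_zero (by positivity)).ne'
    · have : (E * E')⁻¹ * A = E'⁻¹ * (E⁻¹ * A) := by group
      rw [this]
      have hmod : ((m ^ (2 ^ k) : ℕ) : ℤ) ^ 2 = (m : ℤ) ^ (2 ^ (k + 1)) := by
        rw [hcast, ← pow_mul, pow_succ]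
      rwa [hmod] at hB'

/-- Coverage: every `B` is congruent mod `n₂` to an element of `Em m` that is trivial
mod `n₁`, provided `m * n₁` is invertible mod `n₂`. -/
lemma cover (m n₁ n₂ : ℕ) (u v : ℤ) (huv : ((m : ℤ) * n₁) * u + n₂ * v = 1) (B : SL2Z) :
    ∃ E ∈ Em m, MCong (n₂ : ℤ) E B ∧ MCong (n₁ : ℤ) E 1 := by
  have hB : B ∈ TL := by rw [TL_eq_top]; trivial
  induction hB using Subgroup.closure_induction with
  | mem x hx =>
    rcases hx with hx | hx
    · subst hx
      refine ⟨matT ^ ((m : ℤ) * (n₁ * u)), T_zpow_mem m _, ?_, ?_⟩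
      · rw [mcong_iff]
        refine ⟨⟨0, ?_⟩, ⟨-v, ?_⟩, ⟨0, ?_⟩, ⟨0, ?_⟩⟩ <;>
          rw [show ((matT ^ ((m : ℤ) * (n₁ * u)) : SL2Z) : Matrix (Fin 2) (Fin 2) ℤ) = _ from
            coe_T_zpow _, matT_coe] <;>
          simp only [Matrix.cons_val', Matrix.cons_val_zero, Matrix.cons_val_one,
            Matrix.head_cons, Matrix.head_fin_const, Matrix.empty_val', Matrix.cons_val_fin_one,
            Matrix.of_apply]
        · ring
        · linear_combination huv
        · ring
        · ring
      · rw [mcong_iff]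
        refine ⟨⟨0, ?_⟩, ⟨(m : ℤ) * u, ?_⟩, ⟨0, ?_⟩, ⟨0, ?_⟩⟩ <;>
          rw [show ((matT ^ ((m : ℤ) * (n₁ * u)) : SL2Z) : Matrix (Fin 2) (Fin 2) ℤ) = _ from
            coe_T_zpow _] <;>
          simp only [Matrix.SpecialLinearGroup.coe_one, Matrix.one_fin_two, Matrix.cons_val',
            Matrix.cons_val_zero, Matrix.cons_val_one, Matrix.head_cons, Matrix.head_fin_const,
            Matrix.empty_val', Matrix.cons_val_fin_one, Matrix.of_apply] <;>
          ring
    · subst hx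
      refine ⟨matL ^ ((m : ℤ) * (n₁ * u)), L_zpow_mem m _, ?_, ?_⟩
      · rw [mcong_iff]
        refine ⟨⟨0, ?_⟩, ⟨0, ?_⟩, ⟨-v, ?_⟩, ⟨0, ?_⟩⟩ <;>
          rw [show ((matL ^ ((m : ℤ) * (n₁ * u)) : SL2Z) : Matrix (Fin 2) (Fin 2) ℤ) = _ from
            coe_L_zpow _, matL_coe] <;>
          simp only [Matrix.cons_val', Matrix.cons_val_zero, Matrix.cons_val_one,
            Matrix.head_cons, Matrix.head_fin_const, Matrix.empty_val', Matrix.cons_val_fin_one,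
            Matrix.of_apply]
        · ring
        · ring
        · linear_combination huv
        · ring
      · rw [mcong_iff]
        refine ⟨⟨0, ?_⟩, ⟨0, ?_⟩, ⟨(m : ℤ) * u, ?_⟩, ⟨0, ?_⟩⟩ <;>
          rw [show ((matL ^ ((m : ℤ) * (n₁ * u)) : SL2Z) : Matrix (Fin 2) (Fin 2) ℤ) = _ from
            coe_L_zpow _] <;>
          simp only [Matrix.SpecialLinearGroup.coe_one, Matrix.one_fin_two, Matrix.cons_val',
            Matrix.cons_val_zero, Matrix.cons_val_one, Matrix.head_cons, Matrix.head_fin_const,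
            Matrix.empty_val', Matrix.cons_val_fin_one, Matrix.of_apply] <;>
          ring
  | one => exact ⟨1, one_mem _, MCong.refl _ _, MCong.refl _ _⟩
  | mul x y hx hy IHx IHy =>
    obtain ⟨Ex, hEx, hx2, hx1⟩ := IHx
    obtain ⟨Ey, hEy, hy2, hy1⟩ := IHy
    refine ⟨Ex * Ey, mul_mem hEx hEy, MCong.mul hx2 hy2, ?_⟩
    have := MCong.mul hx1 hy1
    rwa [one_mul] at this
  | inv x hx IHx =>
    obtain ⟨Ex, hEx, hx2, hx1⟩ := IHx
    refine ⟨Ex⁻¹, inv_mem hEx, MCong.inv hx2, ?_⟩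
    have := MCong.inv hx1
    rwa [inv_one] at this

/-- Splitting `N` into a part dividing a power of `m` and a part coprime to `m`. -/
lemma split : ∀ N : ℕ, 0 < N → ∀ m : ℕ, 0 < m →
    ∃ n₁ n₂ k : ℕ, N = n₁ * n₂ ∧ Nat.Coprime m n₂ ∧ n₁ ∣ m ^ k := by
  intro N
  induction N using Nat.strong_induction_on with
  | _ N IH =>
  intro hN m hm
  by_cases hg : Nat.gcd m N = 1
  · exact ⟨1, N, 0, by ring, hg, by simp⟩
  · have hgdvdm : Nat.gcd m N ∣ m := Nat.gcd_dvd_left _ _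
    have hgdvdN : Nat.gcd m N ∣ N := Nat.gcd_dvd_right _ _
    have hgpos : 0 < Nat.gcd m N := Nat.gcd_pos_of_pos_left _ hm
    have hg2 : 2 ≤ Nat.gcd m N := by omega
    have hN' : N / Nat.gcd m N < N := Nat.div_lt_self hN hg2
    have hN'pos : 0 < N / Nat.gcd m N :=
      Nat.div_pos (Nat.le_of_dvd hN hgdvdN) hgpos
    obtain ⟨n₁, n₂, k, h1, h2, h3⟩ := IH _ hN' hN'pos m hm
    refine ⟨Nat.gcd m N * n₁, n₂, k + 1, ?_, h2, ?_⟩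
    · rw [mul_assoc, ← h1, Nat.mul_div_cancel' hgdvdN]
    · rw [pow_succ, mul_comm (m ^ k) m]
      exact mul_dvd_mul hgdvdm h3

/-- The main congruence-theoretic step: if `A ∈ Γ(m)` then, modulo any `N` with `m ∣ N`,
`A` agrees with an element of `Em m`. -/
theorem key (m N : ℕ) (hm : 0 < m) (hN : 0 < N) (hmN : m ∣ N) (A : SL2Z)
    (hA : A ∈ Gamma m) : ∃ E ∈ Em m, E⁻¹ * A ∈ Gamma N := by
  obtain ⟨n₁, n₂, k, hsplit, hcop, hdvd1⟩ := split N hN m hm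
  obtain ⟨E₁, hE₁, hB⟩ := iter m hm k A (gamma_iff_mcong.mp hA)
  set B := E₁⁻¹ * A with hBdef
  have hn₁dvd : (n₁ : ℤ) ∣ (m : ℤ) ^ (2 ^ k) := by
    have h1 : n₁ ∣ m ^ (2 ^ k) := hdvd1.trans (pow_dvd_pow m (Nat.le_of_lt (Nat.lt_two_pow_self (n := k))))
    exact_mod_cast Int.natCast_dvd_natCast.mpr h1
  have hn₁B : MCong (n₁ : ℤ) B 1 := hB.of_dvd hn₁dvd
  -- coprimality
  have hcopn₁ : Nat.Coprime n₁ n₂ := Nat.Coprime.coprime_dvd_left hdvd1 (hcop.pow_left k)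
  have hcopM : Nat.Coprime (m * n₁) n₂ := Nat.Coprime.mul hcop hcopn₁
  obtain ⟨u', v', huv'⟩ := (Nat.isCoprime_iff_coprime.mpr hcopM)
  have huv : ((m : ℤ) * n₁) * u' + (n₂ : ℤ) * v' = 1 := by push_cast at huv' ⊢; linarith
  obtain ⟨E₂, hE₂, hcong₂, hcong₁⟩ := cover m n₁ n₂ u' v' huv B
  have hC2 : MCong (n₂ : ℤ) (E₂⁻¹ * B) 1 := by
    have h := MCong.mul (MCong.inv hcong₂) (MCong.refl (n₂ : ℤ) B)
    rwa [inv_mul_cancel] at h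
  have hC1 : MCong (n₁ : ℤ) (E₂⁻¹ * B) 1 := by
    have h := MCong.mul (MCong.inv hcong₁) hn₁B
    rwa [inv_one, one_mul] at h
  have hCN : MCong (N : ℤ) (E₂⁻¹ * B) 1 := by
    intro i j
    have hcopZ : IsCoprime (n₁ : ℤ) (n₂ : ℤ) := Nat.isCoprime_iff_coprime.mpr hcopn₁
    have : ((N : ℤ)) = (n₁ : ℤ) * n₂ := by rw [hsplit]; push_cast; ring
    rw [this]
    exact hcopZ.mul_dvd (hC1 i j) (hC2 i j)
  refine ⟨E₁ * E₂, mul_mem hE₁ hE₂, ?_⟩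
  have : (E₁ * E₂)⁻¹ * A = E₂⁻¹ * B := by rw [hBdef]; group
  rw [this]
  exact gamma_iff_mcong.mpr hCN

lemma projSL_surj : Function.Surjective projSL := QuotientGroup.mk'_surjective _

lemma least_dvd_aux {S : Set ℕ} (hpos : ∀ k ∈ S, 0 < k)
    (hsub : ∀ a b, a ∈ S → b ∈ S → b < a → a - b ∈ S) {w : ℕ} (h : IsLeast S w) :
    ∀ k ∈ S, w ∣ k := by
  intro k
  induction k using Nat.strong_induction_on with
  | _ k IH =>
  intro hk
  rcases eq_or_lt_of_le (h.2 hk) with heq | hlt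
  · exact heq ▸ dvd_refl w
  · have hk' : k - w ∈ S := hsub k w hk h.1 hlt
    have hwpos := hpos w h.1
    have hlt2 : k - w < k := by omega
    have hdvd := IH _ hlt2 hk'
    have hdvd2 : w ∣ (k - w) + w := dvd_add hdvd (dvd_refl w)
    rwa [Nat.sub_add_cancel (le_of_lt hlt)] at hdvd2

section Main

variable (Γ : Subgroup PSL2Z) (w : PSL2Z → ℕ)

lemma width_dvd (hw : ∀ g : PSL2Z, IsLeast {k : ℕ | 0 < k ∧ g * projSL matT ^ k * g⁻¹ ∈ Γ} (w g))
    (g : PSL2Z) (k : ℕ) (hk : 0 < k) (hmem : g * projSL matT ^ k * g⁻¹ ∈ Γ) : w g ∣ k := by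
  set t := projSL matT with ht
  refine least_dvd_aux (fun k hk => hk.1) ?_ (hw g) k ⟨hk, hmem⟩
  rintro a b ⟨ha, hma⟩ ⟨hb, hmb⟩ hba
  refine ⟨by omega, ?_⟩
  have h2 : t ^ (a - b) * t ^ b = t ^ a := pow_sub_mul_pow t hba.le
  have h3 : g * t ^ (a - b) * g⁻¹ = (g * t ^ a * g⁻¹) * (g * t ^ b * g⁻¹)⁻¹ := by
    rw [← h2]; group
  rw [h3]
  exact mul_mem hma (inv_mem hmb)

lemma widths_bounded (hfin : Γ.index ≠ 0)
    (hw : ∀ g : PSL2Z, IsLeast {k : ℕ | 0 < k ∧ g * projSL matT ^ k * g⁻¹ ∈ Γ} (w g)) :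
    ∀ g : PSL2Z, w g ∣ Nat.factorial Γ.index := by
  intro g
  set t := projSL matT with ht
  have hfin' : Finite (PSL2Z ⧸ Γ) := by
    rw [Subgroup.index] at hfin
    exact (Nat.card_ne_zero.mp hfin).2
  haveI := hfin'
  haveI : Fintype (PSL2Z ⧸ Γ) := Fintype.ofFinite _
  set f : Fin (Γ.index + 1) → PSL2Z ⧸ Γ := fun i => ((g * t ^ (i : ℕ) * g⁻¹ : PSL2Z) : PSL2Z ⧸ Γ)
    with hf
  have hninj : ¬ Function.Injective f := by
    intro hinj
    have h1 := Fintype.card_le_of_injective f hinj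
    rw [Fintype.card_fin, ← Nat.card_eq_fintype_card] at h1
    have : Nat.card (PSL2Z ⧸ Γ) = Γ.index := rfl
    omega
  rw [Function.not_injective_iff] at hninj
  obtain ⟨i, j, hfij, hne⟩ := hninj
  -- wlog `i < j`
  have main : ∀ i j : Fin (Γ.index + 1), (i : ℕ) < (j : ℕ) → f i = f j → w g ∣ Nat.factorial Γ.index := by
    intro i j hij hfij
    have hmem : (g * t ^ (i : ℕ) * g⁻¹)⁻¹ * (g * t ^ (j : ℕ) * g⁻¹) ∈ Γ := by
      rw [← QuotientGroup.eq]
      exact hfij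
    have h2 : t ^ ((j : ℕ) - (i : ℕ)) * t ^ (i : ℕ) = t ^ (j : ℕ) :=
      pow_sub_mul_pow t hij.le
    have h3 : (g * t ^ (i : ℕ) * g⁻¹)⁻¹ * (g * t ^ (j : ℕ) * g⁻¹)
        = g * t ^ ((j : ℕ) - (i : ℕ)) * g⁻¹ := by
      rw [← h2, pow_mul_comm]; group
    rw [h3] at hmem
    have hk : 0 < (j : ℕ) - (i : ℕ) := by omega
    have hdvd := width_dvd Γ w hw g _ hk hmem
    refine hdvd.trans (Nat.dvd_factorial hk ?_)
    have := j.2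
    omega
  rcases Ne.lt_or_gt hne with h | h
  · exact main i j (by exact_mod_cast h) hfij
  · exact main j i (by exact_mod_cast h) hfij.symm

end Main

end Wohl

/-- Wohlfahrt's theorem: let `Γ` be a finite-index subgroup of `PSL₂(ℤ)`, let `w g` be the
width of the cusp `g·∞`, and let `m` be the least common multiple of all the cusp widths.
Then `Γ` is congruence if and only if `Γ̄(m) ≤ Γ`. -/
theorem wohlfahrt (Γ : Subgroup PSL2Z) (hfin : Γ.index ≠ 0) (w : PSL2Z → ℕ)
    (hw : ∀ g : PSL2Z, IsLeast {k : ℕ | 0 < k ∧ g * projSL matT ^ k * g⁻¹ ∈ Γ} (w g))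
    (m : ℕ) (hdvd : ∀ g : PSL2Z, w g ∣ m)
    (hlcm : ∀ m' : ℕ, (∀ g : PSL2Z, w g ∣ m') → m ∣ m') :
    (∃ N : ℕ, 0 < N ∧ GammaBar N ≤ Γ) ↔ GammaBar m ≤ Γ := by
  open Wohl in
  have hmpos : 0 < m := by
    have hb := Wohl.widths_bounded Γ w hfin hw
    have hdvdfac := hlcm _ hb
    have : Nat.factorial Γ.index ≠ 0 := Nat.factorial_ne_zero _
    exact Nat.pos_of_ne_zero fun h => this (by simpa [h] using hdvdfac)
  constructor
  · rintro ⟨N, hN, hsub⟩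
    set t := projSL matT with ht
    -- `GammaBar N` is normal
    haveI hGnorm : (CongruenceSubgroup.Gamma N).Normal := CongruenceSubgroup.Gamma_normal N
    have hnorm : (GammaBar N).Normal := Subgroup.Normal.map hGnorm projSL Wohl.projSL_surj
    -- `T^N` lies in `Γ(N)`
    have hTN : matT ^ N ∈ CongruenceSubgroup.Gamma N := by
      rw [Wohl.gamma_iff_mcong, Wohl.mcong_iff]
      have hcoe : ((matT ^ N : SL2Z) : Matrix (Fin 2) (Fin 2) ℤ) = !![1, (N : ℤ); 0, 1] := by
        rw [← zpow_natCast matT N]; exact Wohl.coe_T_zpow _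
      refine ⟨⟨0, ?_⟩, ⟨1, ?_⟩, ⟨0, ?_⟩, ⟨0, ?_⟩⟩ <;>
        rw [hcoe] <;>
        simp [Matrix.SpecialLinearGroup.coe_one, Matrix.one_fin_two]
    -- hence all cusp widths divide `N`, so `m ∣ N`
    have hwN : ∀ g : PSL2Z, w g ∣ N := by
      intro g
      apply Wohl.width_dvd Γ w hw g N hN
      apply hsub
      have htN : t ^ N ∈ GammaBar N := by
        rw [ht, ← map_pow]
        exact Subgroup.mem_map_of_mem projSL hTN
      exact hnorm.conj_mem _ htN g
    have hmN : m ∣ N := hlcm N hwN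
    -- all conjugates of `T^m` lie in `Γ`
    have hconj : ∀ g : PSL2Z, g * t ^ m * g⁻¹ ∈ Γ := by
      intro g
      obtain ⟨c, hc⟩ := hdvd g
      have h1 : g * t ^ m * g⁻¹ = (g * t ^ (w g) * g⁻¹) ^ c := by
        have h := map_pow (MulAut.conj g) (t ^ (w g)) c
        simp only [MulAut.conj_apply] at h
        rw [hc, pow_mul, h]
      rw [h1]
      exact pow_mem (hw g).1.2 c
    -- `Em m` maps into `Γ`
    have hEm : Wohl.Em m ≤ Γ.comap projSL := by
      rw [Wohl.Em, Subgroup.closure_le]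
      rintro x ⟨g, rfl⟩
      show projSL (g * matT ^ m * g⁻¹) ∈ Γ
      rw [_root_.map_mul, _root_.map_mul, map_inv, map_pow]
      exact hconj (projSL g)
    -- conclude
    rintro x ⟨A, hA, rfl⟩
    obtain ⟨E, hE, hEA⟩ := Wohl.key m N hmpos hN hmN A hA
    have hsplit : projSL A = projSL E * projSL (E⁻¹ * A) := by
      rw [← _root_.map_mul, mul_inv_cancel_left]
    rw [hsplit]
    exact mul_mem (hEm hE) (hsub (Subgroup.mem_map_of_mem projSL hEA))
  · intro h
    exact ⟨m, hmpos, h⟩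
end

section
/- The subgroup of PSL₂(ℤ) generated by the images of the six matrices A³, B²A⁻¹, A²B², ABA⁻², B⁻¹A⁻¹B, and AB⁻¹A⁻¹BA⁻¹ is a subgroup of Γ̄(2) of index 5 in Γ̄(2). -/
open Subgroup Matrix UpperHalfPlane Pointwise CongruenceSubgroup


open Subgroup Matrix UpperHalfPlane Pointwise

lemma center_smul_triv (M : SL2Z) (hM : M ∈ Subgroup.center SL2Z) (z : ℍ) : M • z = z := by
  have h := Matrix.SpecialLinearGroup.scalar_eq_self_of_mem_center hM 0
  have hdet : (M : Matrix (Fin 2) (Fin 2) ℤ).det = 1 := M.2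
  rw [← h] at hdet
  have h2 : (M 0 0) * (M 0 0) = 1 := by
    rw [show (Matrix.scalar (Fin 2)) (M 0 0) = Matrix.diagonal (fun _ => (M 0 0)) from rfl,
      Matrix.det_diagonal, Fin.prod_univ_two] at hdet
    exact hdet
  rcases mul_self_eq_one_iff.mp h2 with ht | ht
  · have hM1 : M = 1 := Subtype.ext (by rw [← h, ht]; simp)
    rw [hM1, one_smul]
  · have hM1 : M = -1 := Subtype.ext (by
      rw [← h, ht]
      show Matrix.scalar (Fin 2) (-1) = ((-1 : SL2Z) : Matrix (Fin 2) (Fin 2) ℤ)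
      simp)
    rw [hM1, show (-1 : SL2Z) = -(1 : SL2Z) from rfl, ModularGroup.SL_neg_smul, one_smul]

noncomputable def θ : PSL2Z →* Equiv.Perm ℍ :=
  QuotientGroup.lift (Subgroup.center SL2Z) (MulAction.toPermHom SL2Z ℍ) (by
    intro M hM
    refine Equiv.ext fun z => ?_
    exact center_smul_triv M hM z)

noncomputable instance : MulAction PSL2Z ℍ := MulAction.compHom _ θ

lemma psmul (M : SL2Z) (z : ℍ) : projSL M • z = M • z := rfl

lemma matA_eq : matA = ModularGroup.T ^ (2 : ℤ) :=
  Subtype.ext (by rw [ModularGroup.coe_T_zpow]; rfl)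

lemma re_A_smul (z : ℍ) : (Abar • z).re = z.re + 2 := by
  rw [Abar, psmul, matA_eq, modular_T_zpow_smul]
  simp [UpperHalfPlane.vadd_re]; ring

lemma re_Ainv_smul (z : ℍ) : (Abar⁻¹ • z).re = z.re - 2 := by
  rw [Abar, ← map_inv, psmul, matA_eq, ← _root_.zpow_neg, modular_T_zpow_smul]
  simp [UpperHalfPlane.vadd_re]; ring

noncomputable def Sb : PSL2Z := projSL ModularGroup.S

lemma re_S_smul (z : ℍ) : (Sb • z).re = -z.re / Complex.normSq z := by
  rw [Sb, psmul, modular_S_smul]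
  simp [UpperHalfPlane.mk_re, Complex.inv_re, Complex.normSq_neg, neg_div]

lemma Bbar_eq : Bbar = Sb * Abar⁻¹ * Sb⁻¹ := by
  rw [Bbar, Abar, Sb, ← _root_.map_inv, ← _root_.map_inv, ← _root_.map_mul, ← _root_.map_mul]
  congr 1
  apply Subtype.ext
  show (matB : Matrix (Fin 2) (Fin 2) ℤ) = _
  simp [ModularGroup.S, matA, matB, Matrix.SpecialLinearGroup.coe_mul,
    Matrix.SpecialLinearGroup.SL2_inv_expl]
  decide

def X0 : Set ℍ := {z | 1 ≤ z.re}
def Y0 : Set ℍ := {z | z.re ≤ -1}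

lemma normSq_eq (z : ℍ) : Complex.normSq (z : ℂ) = z.re ^ 2 + z.im ^ 2 := by
  simp [Complex.normSq_apply, UpperHalfPlane.coe_re, UpperHalfPlane.coe_im]; ring

lemma L1 (z : ℍ) (hz : z ∈ Y0) : 0 < (Sb • z).re ∧ (Sb • z).re < 1 := by
  have hn := z.normSq_pos
  have hns := normSq_eq z
  have him : 0 < z.im := z.2
  simp only [Y0, Set.mem_setOf_eq] at hz
  rw [re_S_smul]
  refine ⟨div_pos (by linarith) hn, ?_⟩
  rw [div_lt_one hn]
  nlinarith [mul_nonneg (by linarith : (0:ℝ) ≤ -z.re) (by linarith : (0:ℝ) ≤ -(z.re+1)),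
    mul_pos him him]

lemma L2 (z : ℍ) (hz : z ∈ X0) : -1 < (Sb • z).re ∧ (Sb • z).re < 0 := by
  have hn := z.normSq_pos
  have hns := normSq_eq z
  have him : 0 < z.im := z.2
  simp only [X0, Set.mem_setOf_eq] at hz
  rw [re_S_smul]
  constructor
  · have h1 : z.re / Complex.normSq (z:ℂ) < 1 := by
      rw [div_lt_one hn]
      nlinarith [mul_nonneg (by linarith : (0:ℝ) ≤ z.re) (by linarith : (0:ℝ) ≤ z.re - 1),
        mul_pos him him]
    rw [neg_div]
    linarith
  · rw [neg_div]
    exact neg_neg_of_pos (div_pos (by linarith) hn)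

lemma hX0 : Abar • Y0ᶜ ⊆ X0 := by
  rintro _ ⟨z, hz, rfl⟩
  simp only [Y0, Set.mem_compl_iff, Set.mem_setOf_eq, not_le] at hz
  show 1 ≤ (Abar • z).re
  rw [re_A_smul]; linarith

lemma hY0 : Abar⁻¹ • X0ᶜ ⊆ Y0 := by
  rintro _ ⟨z, hz, rfl⟩
  simp only [X0, Set.mem_compl_iff, Set.mem_setOf_eq, not_le] at hz
  show (Abar⁻¹ • z).re ≤ -1
  rw [re_Ainv_smul]; linarith

lemma hX1 : Bbar • (Sb • X0)ᶜ ⊆ Sb • Y0 := by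
  rw [← Set.smul_set_compl, Bbar_eq, smul_smul, inv_mul_cancel_right, mul_smul]
  exact Set.smul_set_mono hY0

lemma hY1 : Bbar⁻¹ • (Sb • Y0)ᶜ ⊆ Sb • X0 := by
  have : Bbar⁻¹ = Sb * Abar * Sb⁻¹ := by rw [Bbar_eq]; group
  rw [← Set.smul_set_compl, this, smul_smul, inv_mul_cancel_right, mul_smul]
  exact Set.smul_set_mono hX0

lemma dXX : Disjoint X0 (Sb • Y0) := by
  rw [Set.disjoint_left]
  rintro x hx ⟨z, hz, rfl⟩
  have := (L1 z hz).2
  simp only [X0, Set.mem_setOf_eq] at hx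
  linarith

lemma dYY : Disjoint Y0 (Sb • X0) := by
  rw [Set.disjoint_left]
  rintro x hx ⟨z, hz, rfl⟩
  have := (L2 z hz).1
  simp only [Y0, Set.mem_setOf_eq] at hx
  linarith

lemma dX0Y0 : Disjoint X0 Y0 := by
  rw [Set.disjoint_left]
  intro x hx hx'
  simp only [X0, Y0, Set.mem_setOf_eq] at hx hx'
  linarith

lemma dX0Y1 : Disjoint X0 (Sb • X0) := by
  rw [Set.disjoint_left]
  rintro x hx ⟨z, hz, rfl⟩
  have := (L2 z hz).2
  simp only [X0, Set.mem_setOf_eq] at hx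
  linarith

lemma dX1Y0 : Disjoint (Sb • Y0) Y0 := by
  rw [Set.disjoint_left]
  rintro _ ⟨z, hz, rfl⟩ hx'
  have := (L1 z hz).1
  simp only [Y0, Set.mem_setOf_eq] at hx'
  linarith

lemma dX1Y1 : Disjoint (Sb • Y0) (Sb • X0) := by
  rw [Set.disjoint_left]
  rintro _ ⟨z, hz, rfl⟩ ⟨w, hw, hzw⟩
  have : w = z := smul_left_cancel Sb hzw
  subst this
  exact Set.disjoint_left.mp dX0Y0 hw hz

noncomputable def ptX : ℍ := ⟨⟨1, 1⟩, by norm_num⟩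
noncomputable def ptY : ℍ := ⟨⟨-1, 1⟩, by norm_num⟩

lemma ptX_mem : ptX ∈ X0 := by
  show (1:ℝ) ≤ ptX.re
  norm_num [ptX, UpperHalfPlane.re]

lemma ptY_mem : ptY ∈ Y0 := by
  show ptY.re ≤ -1
  norm_num [ptY, UpperHalfPlane.re]

lemma inj : Function.Injective (FreeGroup.lift ![Abar, Bbar]) := by
  apply FreeGroup.injective_lift_of_ping_pong ![Abar, Bbar] ![X0, Sb • Y0] ![Y0, Sb • X0]
  · intro i
    fin_cases i
    · exact ⟨ptX, ptX_mem⟩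
    · exact (Set.Nonempty.smul_set ⟨ptY, ptY_mem⟩)
  · intro i j hij
    fin_cases i <;> fin_cases j <;>
      simp only [Function.onFun, Matrix.cons_val_zero, Matrix.cons_val_one, Matrix.head_cons,
        Fin.mk_zero, Fin.mk_one] at hij ⊢
    · exact absurd rfl hij
    · exact dXX
    · exact dXX.symm
    · exact absurd rfl hij
  · intro i j hij
    fin_cases i <;> fin_cases j <;>
      simp only [Function.onFun, Matrix.cons_val_zero, Matrix.cons_val_one, Matrix.head_cons,
        Fin.mk_zero, Fin.mk_one] at hij ⊢
    · exact absurd rfl hij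
    · exact dYY
    · exact dYY.symm
    · exact absurd rfl hij
  · intro i j
    fin_cases i <;> fin_cases j <;>
      simp only [Matrix.cons_val_zero, Matrix.cons_val_one, Matrix.head_cons,
        Fin.mk_zero, Fin.mk_one]
    · exact dX0Y0
    · exact dX0Y1
    · exact dX1Y0
    · exact dX1Y1
  · intro i
    fin_cases i <;>
      simp only [Matrix.cons_val_zero, Matrix.cons_val_one, Matrix.head_cons,
        Fin.mk_zero, Fin.mk_one]
    · exact hX0
    · exact hX1
  · intro i
    fin_cases i <;>
      simp only [Matrix.cons_val_zero, Matrix.cons_val_one, Matrix.head_cons, Pi.inv_apply,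
        Fin.mk_zero, Fin.mk_one]
    · exact hY0
    · exact hY1

open Subgroup

abbrev F2 := FreeGroup (Fin 2)

def sa : Equiv.Perm (Fin 5) :=
  ⟨![1,2,0,3,4], ![2,0,1,3,4], by decide, by decide⟩
def sb : Equiv.Perm (Fin 5) :=
  ⟨![3,2,4,1,0], ![4,3,1,0,2], by decide, by decide⟩

def ρ : F2 →* Equiv.Perm (Fin 5) := FreeGroup.lift ![sa, sb]

instance F2act : MulAction F2 (Fin 5) := MulAction.compHom _ ρ

lemma f2_smul_def (g : F2) (x : Fin 5) : g • x = ρ g x := rfl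

-- the generators
def ga : F2 := FreeGroup.of 0
def gb : F2 := FreeGroup.of 1

def v1 : F2 := ga ^ 3
def v2 : F2 := gb ^ 2 * ga⁻¹
def v3 : F2 := ga ^ 2 * gb ^ 2
def v4 : F2 := ga * gb * ga⁻¹ ^ 2
def v5 : F2 := gb⁻¹ * ga⁻¹ * gb
def v6 : F2 := ga * gb⁻¹ * ga⁻¹ * gb * ga⁻¹

def W : Subgroup F2 := Subgroup.closure {v1, v2, v3, v4, v5, v6}

lemma mem_W (i : Fin 6) : (![v1,v2,v3,v4,v5,v6] i) ∈ W := by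
  fin_cases i <;>
    exact Subgroup.subset_closure (by norm_num [Matrix.cons_val_zero, Matrix.cons_val_one])

lemma ρa : ρ ga = sa := by simp [_root_.ρ, ga, FreeGroup.lift_apply_of]
lemma ρb : ρ gb = sb := by simp [_root_.ρ, gb, FreeGroup.lift_apply_of]

-- W is in the stabilizer of 0
lemma W_le_stab : W ≤ MulAction.stabilizer F2 (0 : Fin 5) := by
  rw [W, Subgroup.closure_le]
  rintro x (rfl | rfl | rfl | rfl | rfl | rfl) <;>
    · show _ • (0 : Fin 5) = 0
      rw [f2_smul_def]
      simp only [v1, v2, v3, v4, v5, v6, _root_.map_mul, _root_.map_pow, _root_.map_inv, ρa, ρb]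
      decide

lemma stab_index : (MulAction.stabilizer F2 (0 : Fin 5)).index = 5 := by
  rw [MulAction.index_stabilizer]
  have : MulAction.orbit F2 (0 : Fin 5) = Set.univ := by
    rw [Set.eq_univ_iff_forall]
    intro x
    fin_cases x
    · exact ⟨1, by show (1 : F2) • (0 : Fin 5) = _; rw [f2_smul_def]; simp⟩
    · exact ⟨ga, by show ga • (0 : Fin 5) = _; rw [f2_smul_def, ρa]; decide⟩
    · exact ⟨ga^2, by show ga^2 • (0 : Fin 5) = _; rw [f2_smul_def, map_pow, ρa]; decide⟩
    · exact ⟨gb, by show gb • (0 : Fin 5) = _; rw [f2_smul_def, ρb]; decide⟩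
    · exact ⟨gb⁻¹, by show gb⁻¹ • (0 : Fin 5) = _; rw [f2_smul_def, map_inv, ρb]; decide⟩
  rw [this, Set.ncard_univ]
  simp

def tv : Fin 5 → F2
  | 0 => 1
  | 1 => ga
  | 2 => ga⁻¹
  | 3 => gb
  | 4 => gb⁻¹

lemma hv1 : v1 ∈ W := Subgroup.subset_closure (by simp)
lemma hv2 : v2 ∈ W := Subgroup.subset_closure (by simp)
lemma hv3 : v3 ∈ W := Subgroup.subset_closure (by simp)
lemma hv4 : v4 ∈ W := Subgroup.subset_closure (by simp)
lemma hv5 : v5 ∈ W := Subgroup.subset_closure (by simp)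
lemma hv6 : v6 ∈ W := Subgroup.subset_closure (by simp)

lemma step_a : ∀ i : Fin 5, ∃ j : Fin 5, (tv j)⁻¹ * ga * tv i ∈ W := by
  intro i; fin_cases i
  · exact ⟨1, by show ga⁻¹ * ga * 1 ∈ W
                 have e : ga⁻¹ * ga * (1:F2) = 1 := by group
                 rw [e]; exact one_mem W⟩
  · exact ⟨2, by show (ga⁻¹)⁻¹ * ga * ga ∈ W
                 have e : (ga⁻¹)⁻¹ * ga * ga = v1 := by decide
                 rw [e]; exact hv1⟩
  · exact ⟨0, by show (1:F2)⁻¹ * ga * ga⁻¹ ∈ W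
                 have e : (1:F2)⁻¹ * ga * ga⁻¹ = 1 := by decide
                 rw [e]; exact one_mem W⟩
  · exact ⟨3, by show gb⁻¹ * ga * gb ∈ W
                 have e : gb⁻¹ * ga * gb = v5⁻¹ := by decide
                 rw [e]; exact inv_mem hv5⟩
  · exact ⟨4, by show (gb⁻¹)⁻¹ * ga * gb⁻¹ ∈ W
                 have e : (gb⁻¹)⁻¹ * ga * gb⁻¹ = v2 * v6⁻¹ * v2⁻¹ := by decide
                 rw [e]; exact mul_mem (mul_mem hv2 (inv_mem hv6)) (inv_mem hv2)⟩

lemma step_b : ∀ i : Fin 5, ∃ j : Fin 5, (tv j)⁻¹ * gb * tv i ∈ W := by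
  intro i; fin_cases i
  · exact ⟨3, by show gb⁻¹ * gb * 1 ∈ W
                 have e : gb⁻¹ * gb * (1:F2) = 1 := by group
                 rw [e]; exact one_mem W⟩
  · exact ⟨2, by show (ga⁻¹)⁻¹ * gb * ga ∈ W
                 have e : (ga⁻¹)⁻¹ * gb * ga = v4 * v1 := by decide
                 rw [e]; exact mul_mem hv4 hv1⟩
  · exact ⟨4, by show (gb⁻¹)⁻¹ * gb * ga⁻¹ ∈ W
                 have e : (gb⁻¹)⁻¹ * gb * ga⁻¹ = v2 := by decide
                 rw [e]; exact hv2⟩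
  · exact ⟨1, by show ga⁻¹ * gb * gb ∈ W
                 have e : ga⁻¹ * gb * gb = v1⁻¹ * v3 := by decide
                 rw [e]; exact mul_mem (inv_mem hv1) hv3⟩
  · exact ⟨0, by show (1:F2)⁻¹ * gb * gb⁻¹ ∈ W
                 have e : (1:F2)⁻¹ * gb * gb⁻¹ = 1 := by decide
                 rw [e]; exact one_mem W⟩

lemma step_a' : ∀ i : Fin 5, ∃ j : Fin 5, (tv j)⁻¹ * ga⁻¹ * tv i ∈ W := by
  intro i; fin_cases i
  · exact ⟨2, by show (ga⁻¹)⁻¹ * ga⁻¹ * 1 ∈ W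
                 have e : (ga⁻¹)⁻¹ * ga⁻¹ * (1:F2) = 1 := by decide
                 rw [e]; exact one_mem W⟩
  · exact ⟨0, by show (1:F2)⁻¹ * ga⁻¹ * ga ∈ W
                 have e : (1:F2)⁻¹ * ga⁻¹ * ga = 1 := by decide
                 rw [e]; exact one_mem W⟩
  · exact ⟨1, by show ga⁻¹ * ga⁻¹ * ga⁻¹ ∈ W
                 have e : ga⁻¹ * ga⁻¹ * ga⁻¹ = v1⁻¹ := by decide
                 rw [e]; exact inv_mem hv1⟩
  · exact ⟨3, by show gb⁻¹ * ga⁻¹ * gb ∈ W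
                 exact hv5⟩
  · exact ⟨4, by show (gb⁻¹)⁻¹ * ga⁻¹ * gb⁻¹ ∈ W
                 have e : (gb⁻¹)⁻¹ * ga⁻¹ * gb⁻¹ = v2 * v6 * v2⁻¹ := by decide
                 rw [e]; exact mul_mem (mul_mem hv2 hv6) (inv_mem hv2)⟩

lemma step_b' : ∀ i : Fin 5, ∃ j : Fin 5, (tv j)⁻¹ * gb⁻¹ * tv i ∈ W := by
  intro i; fin_cases i
  · exact ⟨4, by show (gb⁻¹)⁻¹ * gb⁻¹ * 1 ∈ W
                 have e : (gb⁻¹)⁻¹ * gb⁻¹ * (1:F2) = 1 := by decide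
                 rw [e]; exact one_mem W⟩
  · exact ⟨3, by show gb⁻¹ * gb⁻¹ * ga ∈ W
                 have e : gb⁻¹ * gb⁻¹ * ga = v3⁻¹ * v1 := by decide
                 rw [e]; exact mul_mem (inv_mem hv3) hv1⟩
  · exact ⟨1, by show ga⁻¹ * gb⁻¹ * ga⁻¹ ∈ W
                 have e : ga⁻¹ * gb⁻¹ * ga⁻¹ = v1⁻¹ * v4⁻¹ := by decide
                 rw [e]; exact mul_mem (inv_mem hv1) (inv_mem hv4)⟩
  · exact ⟨0, by show (1:F2)⁻¹ * gb⁻¹ * gb ∈ W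
                 have e : (1:F2)⁻¹ * gb⁻¹ * gb = 1 := by decide
                 rw [e]; exact one_mem W⟩
  · exact ⟨2, by show (ga⁻¹)⁻¹ * gb⁻¹ * gb⁻¹ ∈ W
                 have e : (ga⁻¹)⁻¹ * gb⁻¹ * gb⁻¹ = v2⁻¹ := by decide
                 rw [e]; exact inv_mem hv2⟩

lemma coverage (g : F2) : ∃ i : Fin 5, (tv i)⁻¹ * g ∈ W := by
  have hg : g ∈ Subgroup.closure (Set.range (FreeGroup.of : Fin 2 → F2)) := by
    rw [FreeGroup.closure_range_of]; trivial
  induction hg using Subgroup.closure_induction_left with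
  | one => exact ⟨0, by rw [show tv 0 = 1 from rfl]; simpa using one_mem W⟩
  | mul_left x hx y hy ih =>
      obtain ⟨i, hi⟩ := ih
      obtain ⟨k, rfl⟩ := hx
      fin_cases k
      · obtain ⟨j, hj⟩ := step_a i
        refine ⟨j, ?_⟩
        show (tv j)⁻¹ * (ga * y) ∈ W
        have e : (tv j)⁻¹ * (ga * y)
            = ((tv j)⁻¹ * ga * tv i) * ((tv i)⁻¹ * y) := by group
        rw [e]; exact mul_mem hj hi
      · obtain ⟨j, hj⟩ := step_b i
        refine ⟨j, ?_⟩
        show (tv j)⁻¹ * (gb * y) ∈ W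
        have e : (tv j)⁻¹ * (gb * y)
            = ((tv j)⁻¹ * gb * tv i) * ((tv i)⁻¹ * y) := by group
        rw [e]; exact mul_mem hj hi
  | inv_mul_cancel x hx y hy ih =>
      obtain ⟨i, hi⟩ := ih
      obtain ⟨k, rfl⟩ := hx
      fin_cases k
      · obtain ⟨j, hj⟩ := step_a' i
        refine ⟨j, ?_⟩
        show (tv j)⁻¹ * (ga⁻¹ * y) ∈ W
        have e : (tv j)⁻¹ * (ga⁻¹ * y)
            = ((tv j)⁻¹ * ga⁻¹ * tv i) * ((tv i)⁻¹ * y) := by group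
        rw [e]; exact mul_mem hj hi
      · obtain ⟨j, hj⟩ := step_b' i
        refine ⟨j, ?_⟩
        show (tv j)⁻¹ * (gb⁻¹ * y) ∈ W
        have e : (tv j)⁻¹ * (gb⁻¹ * y)
            = ((tv j)⁻¹ * gb⁻¹ * tv i) * ((tv i)⁻¹ * y) := by group
        rw [e]; exact mul_mem hj hi

lemma W_index : W.index = 5 := by
  have hle : W.index ≤ 5 := by
    have hsurj : Function.Surjective
        (fun i : Fin 5 => ((tv i : F2) : F2 ⧸ W)) := by
      intro x
      obtain ⟨g, rfl⟩ := QuotientGroup.mk_surjective x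
      obtain ⟨i, hi⟩ := coverage g
      exact ⟨i, (QuotientGroup.eq.mpr hi).symm ▸ rfl⟩
    calc W.index = Nat.card (F2 ⧸ W) := rfl
    _ ≤ Nat.card (Fin 5) := Nat.card_le_card_of_surjective _ hsurj
    _ = 5 := by simp
  have hdvd : 5 ∣ W.index := by
    rw [← stab_index]
    exact Subgroup.index_dvd_of_le W_le_stab
  have hne : W.index ≠ 0 := by
    have : Finite (F2 ⧸ W) := by
      have hsurj : Function.Surjective
          (fun i : Fin 5 => ((tv i : F2) : F2 ⧸ W)) := by
        intro x
        obtain ⟨g, rfl⟩ := QuotientGroup.mk_surjective x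
        obtain ⟨i, hi⟩ := coverage g
        exact ⟨i, (QuotientGroup.eq.mpr hi).symm ▸ rfl⟩
      exact Finite.of_surjective _ hsurj
    simpa [Subgroup.index] using Nat.card_ne_zero.mpr ⟨inferInstance, this⟩
  omega



-- balanced residue
lemma balanced (v m : ℤ) (hm : 0 < m) (hpar : Odd (v + m)) :
    ∃ k : ℤ, (v + 2 * k * m).natAbs < m.natAbs := by
  set r := v % (2 * m) with hr
  have h2m : (0:ℤ) < 2 * m := by linarith
  have hr0 : 0 ≤ r := Int.emod_nonneg v (by positivity : (0:ℤ) < 2*m).ne'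
  have hrlt : r < 2 * m := Int.emod_lt_of_pos v h2m
  have hk : ∃ k : ℤ, r = v + 2 * k * m := by
    refine ⟨-(v / (2 * m)), ?_⟩
    rw [hr, Int.emod_def]; ring
  obtain ⟨k, hkr⟩ := hk
  have hpar' : Odd (r + m) := by
    have : r + m = (v + m) + 2 * k * m := by rw [hkr]; ring
    rw [this]
    rcases hpar with ⟨t, ht⟩
    exact ⟨t + k * m, by rw [ht]; ring⟩
  have hrm : r ≠ m := by
    intro h
    rcases hpar' with ⟨t, ht⟩
    omega
  rcases lt_or_gt_of_ne hrm with h | h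
  · exact ⟨k, by omega⟩
  · exact ⟨k - 1, by
      have : v + 2 * (k - 1) * m = r - 2 * m := by rw [hkr]; ring
      omega⟩

lemma balanced' (v m : ℤ) (hm : m ≠ 0) (hpar : Odd (v + m)) :
    ∃ k : ℤ, (v + 2 * k * m).natAbs < m.natAbs := by
  rcases hm.lt_or_gt with h | h
  · obtain ⟨k, hk⟩ := balanced v (-m) (by linarith) (by
      rcases hpar with ⟨t, ht⟩
      exact ⟨t - m, by omega⟩)
    refine ⟨-k, ?_⟩
    have : v + 2 * -k * m = v + 2 * k * -m := by ring
    rw [this]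
    simpa [Int.natAbs_neg] using hk
  · exact balanced v m h hpar

lemma matA_zpow (k : ℤ) : (matA ^ k : SL2Z) = ⟨!![1, 2*k; 0, 1], by norm_num [Matrix.det_fin_two_of]⟩ := by
  induction k using Int.induction_on with
  | zero => apply Subtype.ext; simp; decide
  | succ n ih =>
      rw [_root_.zpow_add, zpow_one, ih]
      apply Subtype.ext
      show (!![1, 2*(n:ℤ); 0, 1] * !![1, 2; 0, 1] : Matrix (Fin 2) (Fin 2) ℤ)
        = !![1, 2*((n:ℤ)+1); 0, 1]
      rw [Matrix.mul_fin_two]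
      ext i j
      fin_cases i <;> fin_cases j <;> simp <;> ring
  | pred n ih =>
      rw [show (-(n:ℤ) - 1) = (-n) + (-1) by ring, _root_.zpow_add, ih]
      apply Subtype.ext
      have hinv : (matA ^ (-1 : ℤ)) = ⟨!![1, -2; 0, 1], by norm_num [Matrix.det_fin_two_of]⟩ := by
        rw [_root_.zpow_neg_one]
        apply Subtype.ext
        rw [Matrix.SpecialLinearGroup.SL2_inv_expl]
        show _ = (!![1, -2; 0, 1] : Matrix (Fin 2) (Fin 2) ℤ)
        norm_num [matA]
        rfl
      rw [hinv]
      show (!![1, 2*(-n:ℤ); 0, 1] * !![1, -2; 0, 1] : Matrix (Fin 2) (Fin 2) ℤ)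
        = !![1, 2*(-(n:ℤ)+-1); 0, 1]
      rw [Matrix.mul_fin_two]
      ext i j
      fin_cases i <;> fin_cases j <;> simp <;> ring

lemma matB_zpow (k : ℤ) : (matB ^ k : SL2Z) = ⟨!![1, 0; 2*k, 1], by norm_num [Matrix.det_fin_two_of]⟩ := by
  induction k using Int.induction_on with
  | zero => apply Subtype.ext; simp; decide
  | succ n ih =>
      rw [_root_.zpow_add, zpow_one, ih]
      apply Subtype.ext
      show (!![1, 0; 2*(n:ℤ), 1] * !![1, 0; 2, 1] : Matrix (Fin 2) (Fin 2) ℤ)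
        = !![1, 0; 2*((n:ℤ)+1), 1]
      rw [Matrix.mul_fin_two]
      ext i j
      fin_cases i <;> fin_cases j <;> simp <;> ring
  | pred n ih =>
      rw [show (-(n:ℤ) - 1) = (-n) + (-1) by ring, _root_.zpow_add, ih]
      apply Subtype.ext
      have hinv : (matB ^ (-1 : ℤ)) = ⟨!![1, 0; -2, 1], by norm_num [Matrix.det_fin_two_of]⟩ := by
        rw [_root_.zpow_neg_one]
        apply Subtype.ext
        rw [Matrix.SpecialLinearGroup.SL2_inv_expl]
        show _ = (!![1, 0; -2, 1] : Matrix (Fin 2) (Fin 2) ℤ)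
        norm_num [matB]
        rfl
      rw [hinv]
      show (!![1, 0; 2*(-n:ℤ), 1] * !![1, 0; -2, 1] : Matrix (Fin 2) (Fin 2) ℤ)
        = !![1, 0; 2*(-(n:ℤ)+-1), 1]
      rw [Matrix.mul_fin_two]
      ext i j
      fin_cases i <;> fin_cases j <;> simp <;> ring

lemma center_neg_one : (-1 : SL2Z) ∈ Subgroup.center SL2Z := by
  rw [Subgroup.mem_center_iff]
  intro g
  apply Subtype.ext
  simp

lemma proj_neg (M : SL2Z) : projSL (-M) = projSL M := by
  have h : (-M) = (-1 : SL2Z) * M := by apply Subtype.ext; simp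
  rw [h, _root_.map_mul]
  have h1 : projSL (-1 : SL2Z) = 1 := (QuotientGroup.eq_one_iff _).mpr center_neg_one
  rw [h1, one_mul]

lemma matA_mem : matA ∈ Gamma 2 := by
  rw [Gamma_mem]
  refine ⟨rfl, rfl, rfl, rfl⟩

lemma matB_mem : matB ∈ Gamma 2 := by
  rw [Gamma_mem]
  refine ⟨rfl, rfl, rfl, rfl⟩

lemma mulA_e00 (k : ℤ) (M : SL2Z) : (matA ^ k * M) 0 0 = M 0 0 + 2 * k * M 1 0 := by
  rw [matA_zpow]
  show (!![1, 2*k; 0, 1] * (M : Matrix (Fin 2) (Fin 2) ℤ)) 0 0 = _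
  rw [Matrix.mul_apply, Fin.sum_univ_two]
  simp

lemma mulA_e10 (k : ℤ) (M : SL2Z) : (matA ^ k * M) 1 0 = M 1 0 := by
  rw [matA_zpow]
  show (!![1, 2*k; 0, 1] * (M : Matrix (Fin 2) (Fin 2) ℤ)) 1 0 = _
  rw [Matrix.mul_apply, Fin.sum_univ_two]
  simp

lemma mulB_e10 (l : ℤ) (M : SL2Z) : (matB ^ l * M) 1 0 = M 1 0 + 2 * l * M 0 0 := by
  rw [matB_zpow]
  show (!![1, 0; 2*l, 1] * (M : Matrix (Fin 2) (Fin 2) ℤ)) 1 0 = _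
  rw [Matrix.mul_apply, Fin.sum_univ_two]
  simp
  ring

lemma int_even_of_zmod (c : ℤ) (h : (c : ZMod 2) = 0) : Even c := by
  obtain ⟨k, hk⟩ := (ZMod.intCast_zmod_eq_zero_iff_dvd c 2).mp h
  exact ⟨k, by omega⟩

lemma int_odd_of_zmod (a : ℤ) (h : (a : ZMod 2) = 1) : Odd a := by
  rcases Int.even_or_odd a with he | ho
  · exfalso
    obtain ⟨k, hk⟩ := he
    have h2 : ((a : ℤ) : ZMod 2) = 0 := by
      apply (ZMod.intCast_zmod_eq_zero_iff_dvd a 2).mpr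
      exact ⟨k, by omega⟩
    rw [h2] at h
    exact absurd h (by decide)
  · exact ho

lemma gen2_aux : ∀ n : ℕ, ∀ M : SL2Z, (M 1 0).natAbs = n → M ∈ Gamma 2 →
    projSL M ∈ Subgroup.closure {Abar, Bbar} := by
  intro n
  induction n using Nat.strong_induction_on with
  | _ n ih =>
  intro M hn hM
  obtain ⟨h00, h01, h10, h11⟩ := Gamma_mem.mp hM
  have hdet : M 0 0 * M 1 1 - M 0 1 * M 1 0 = 1 := by
    have := M.2
    rwa [Matrix.det_fin_two] at this
  by_cases hc : M 1 0 = 0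
  · -- c = 0
    have had : M 0 0 * M 1 1 = 1 := by rw [hc] at hdet; linarith
    obtain ⟨k, hk⟩ : ∃ k, M 0 1 = 2 * k := by
      obtain ⟨k, hk⟩ := int_even_of_zmod _ h01
      exact ⟨k, by omega⟩
    rcases Int.mul_eq_one_iff_eq_one_or_neg_one.mp had with ⟨ha, hd⟩ | ⟨ha, hd⟩
    · have hMA : M = matA ^ k := by
        rw [matA_zpow]
        apply Subtype.ext
        show (M : Matrix (Fin 2) (Fin 2) ℤ) = !![1, 2*k; 0, 1]
        ext i j
        fin_cases i <;> fin_cases j <;> simp [ha, hd, hc, hk]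
      rw [hMA, map_zpow]
      exact Subgroup.zpow_mem _ (Subgroup.subset_closure (Set.mem_insert _ _)) k
    · have hMA : -M = matA ^ (-k) := by
        rw [matA_zpow]
        apply Subtype.ext
        show (-(M : Matrix (Fin 2) (Fin 2) ℤ)) = !![1, 2*(-k); 0, 1]
        ext i j
        fin_cases i <;> fin_cases j <;> simp [ha, hd, hc, hk]
      rw [← proj_neg, hMA, map_zpow]
      exact Subgroup.zpow_mem _ (Subgroup.subset_closure (Set.mem_insert _ _)) (-k)
  · -- c ≠ 0
    have hodd_a : Odd (M 0 0) := int_odd_of_zmod _ h00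
    have heven_c : Even (M 1 0) := int_even_of_zmod _ h10
    obtain ⟨k, hk⟩ := balanced' (M 0 0) (M 1 0) hc (hodd_a.add_even heven_c)
    set M' := matA ^ k * M with hM'
    have ha' : M' 0 0 = M 0 0 + 2 * k * M 1 0 := mulA_e00 k M
    have hc' : M' 1 0 = M 1 0 := mulA_e10 k M
    have hodd_a' : Odd (M' 0 0) := by
      rw [ha']
      rcases hodd_a with ⟨t, ht⟩
      exact ⟨t + k * M 1 0, by rw [ht]; ring⟩
    have ha'ne : M' 0 0 ≠ 0 := by
      intro h0
      rw [h0] at hodd_a'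
      exact (Int.not_even_iff_odd.mpr hodd_a') (Even.zero)
    have heven_c' : Even (M' 1 0) := by rw [hc']; exact heven_c
    obtain ⟨l, hl⟩ := balanced' (M' 1 0) (M' 0 0) ha'ne (heven_c'.add_odd hodd_a')
    set M'' := matB ^ l * M' with hM''
    have hc'' : M'' 1 0 = M' 1 0 + 2 * l * M' 0 0 := mulB_e10 l M'
    have hmem'' : M'' ∈ Gamma 2 := by
      apply Subgroup.mul_mem
      · exact Subgroup.zpow_mem _ matB_mem l
      · exact Subgroup.mul_mem _ (Subgroup.zpow_mem _ matA_mem k) hM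
    have hlt : (M'' 1 0).natAbs < n := by
      rw [hc'']
      calc (M' 1 0 + 2 * l * M' 0 0).natAbs < (M' 0 0).natAbs := hl
      _ = (M 0 0 + 2 * k * M 1 0).natAbs := by rw [ha']
      _ < (M 1 0).natAbs := hk
      _ = n := hn
    have hrec := ih _ hlt M'' rfl hmem''
    have hMeq : M = matA ^ (-k) * (matB ^ (-l) * M'') := by
      rw [hM'', hM']
      group
    rw [hMeq]
    rw [_root_.map_mul, _root_.map_mul, map_zpow, map_zpow]
    have hAmem : Abar ∈ Subgroup.closure {Abar, Bbar} := Subgroup.subset_closure (Set.mem_insert _ _)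
    have hBmem : Bbar ∈ Subgroup.closure {Abar, Bbar} := Subgroup.subset_closure (Set.mem_insert_of_mem _ rfl)
    exact Subgroup.mul_mem _ (Subgroup.zpow_mem _ hAmem (-k))
      (Subgroup.mul_mem _ (Subgroup.zpow_mem _ hBmem (-l)) hrec)

lemma GammaBar_eq : (CongruenceSubgroup.Gamma 2).map projSL = Subgroup.closure {Abar, Bbar} := by
  apply le_antisymm
  · rintro x ⟨M, hM, rfl⟩
    exact gen2_aux (M 1 0).natAbs M rfl hM
  · rw [Subgroup.closure_le]
    rintro x (rfl | rfl)
    · exact ⟨matA, matA_mem, rfl⟩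
    · exact ⟨matB, matB_mem, rfl⟩




-- ============ glue ============

noncomputable def phiF : F2 →* PSL2Z := FreeGroup.lift ![Abar, Bbar]

lemma phiF_inj : Function.Injective phiF := inj

lemma range_vec : Set.range ![Abar, Bbar] = {Abar, Bbar} := by
  ext x
  constructor
  · rintro ⟨i, rfl⟩
    fin_cases i
    · exact Set.mem_insert _ _
    · exact Set.mem_insert_of_mem _ rfl
  · rintro (rfl | rfl)
    · exact ⟨0, rfl⟩
    · exact ⟨1, rfl⟩

lemma phiF_range : phiF.range = GammaBar 2 := by
  rw [phiF, FreeGroup.range_lift_eq_closure, range_vec, GammaBar, GammaBar_eq]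

noncomputable def eIso : F2 ≃* (GammaBar 2) :=
  (MonoidHom.ofInjective phiF_inj).trans (MulEquiv.subgroupCongr phiF_range)

lemma eIso_coe (g : F2) : ((eIso g : GammaBar 2) : PSL2Z) = phiF g := by
  simp [eIso, MulEquiv.subgroupCongr_apply, MonoidHom.ofInjective_apply]

lemma phi_v1 : phiF v1 = Abar ^ 3 := by
  simp [phiF, v1, ga, map_pow, FreeGroup.lift_apply_of]
lemma phi_v2 : phiF v2 = Bbar ^ 2 * Abar⁻¹ := by
  simp [phiF, v2, ga, gb, map_pow, FreeGroup.lift_apply_of]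
lemma phi_v3 : phiF v3 = Abar ^ 2 * Bbar ^ 2 := by
  simp [phiF, v3, ga, gb, map_pow, FreeGroup.lift_apply_of]
lemma phi_v4 : phiF v4 = Abar * Bbar * Abar⁻¹ ^ 2 := by
  simp [phiF, v4, ga, gb, map_pow, FreeGroup.lift_apply_of]
lemma phi_v5 : phiF v5 = Bbar⁻¹ * Abar⁻¹ * Bbar := by
  simp [phiF, v5, ga, gb, FreeGroup.lift_apply_of]
lemma phi_v6 : phiF v6 = Abar * Bbar⁻¹ * Abar⁻¹ * Bbar * Abar⁻¹ := by
  simp [phiF, v6, ga, gb, FreeGroup.lift_apply_of]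

def Sgen : Set PSL2Z :=
  {Abar ^ 3, Bbar ^ 2 * Abar⁻¹, Abar ^ 2 * Bbar ^ 2,
    Abar * Bbar * Abar⁻¹ ^ 2, Bbar⁻¹ * Abar⁻¹ * Bbar,
    Abar * Bbar⁻¹ * Abar⁻¹ * Bbar * Abar⁻¹}

lemma Abar_mem : Abar ∈ GammaBar 2 := ⟨matA, matA_mem, rfl⟩
lemma Bbar_mem : Bbar ∈ GammaBar 2 := ⟨matB, matB_mem, rfl⟩

lemma part1 : Subgroup.closure Sgen ≤ GammaBar 2 := by
  rw [Subgroup.closure_le]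
  rintro x (rfl | rfl | rfl | rfl | rfl | rfl)
  · exact pow_mem Abar_mem 3
  · exact mul_mem (pow_mem Bbar_mem 2) (inv_mem Abar_mem)
  · exact mul_mem (pow_mem Abar_mem 2) (pow_mem Bbar_mem 2)
  · exact mul_mem (mul_mem Abar_mem Bbar_mem) (pow_mem (inv_mem Abar_mem) 2)
  · exact mul_mem (mul_mem (inv_mem Bbar_mem) (inv_mem Abar_mem)) Bbar_mem
  · exact mul_mem (mul_mem (mul_mem (mul_mem Abar_mem (inv_mem Bbar_mem))
      (inv_mem Abar_mem)) Bbar_mem) (inv_mem Abar_mem)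

lemma key_map : Subgroup.map eIso.toMonoidHom W
    = (Subgroup.closure Sgen).subgroupOf (GammaBar 2) := by
  apply Subgroup.map_injective (Subgroup.subtype_injective (GammaBar 2))
  rw [Subgroup.subgroupOf_map_subtype, inf_eq_left.mpr part1]
  rw [Subgroup.map_map, W, MonoidHom.map_closure]
  congr 1
  have hc : ∀ g : F2, ((GammaBar 2).subtype.comp eIso.toMonoidHom) g = phiF g := fun g =>
    eIso_coe g
  show (((GammaBar 2).subtype.comp eIso.toMonoidHom) '' {v1, v2, v3, v4, v5, v6}) = Sgen
  simp only [Set.image_insert_eq, Set.image_singleton, hc,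
    phi_v1, phi_v2, phi_v3, phi_v4, phi_v5, phi_v6, Sgen]

lemma relindex_eq : (Subgroup.closure Sgen).relIndex (GammaBar 2) = 5 := by
  rw [Subgroup.relIndex, ← key_map]
  rw [Subgroup.map_equiv_eq_comap_symm']
  rw [Subgroup.index_comap_of_surjective _ eIso.symm.surjective]
  exact W_index


/-- The group of graph (a): `⟨A³, B²A⁻¹, A²B², ABA⁻², B⁻¹A⁻¹B, AB⁻¹A⁻¹BA⁻¹⟩` is a
subgroup of `Γ̄(2)` of index 5 in `Γ̄(2)`. -/
theorem graph_a_index_five :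
    Subgroup.closure ({Abar ^ 3, Bbar ^ 2 * Abar⁻¹, Abar ^ 2 * Bbar ^ 2,
        Abar * Bbar * Abar⁻¹ ^ 2, Bbar⁻¹ * Abar⁻¹ * Bbar,
        Abar * Bbar⁻¹ * Abar⁻¹ * Bbar * Abar⁻¹} : Set PSL2Z) ≤ GammaBar 2 ∧
    (Subgroup.closure ({Abar ^ 3, Bbar ^ 2 * Abar⁻¹, Abar ^ 2 * Bbar ^ 2,
        Abar * Bbar * Abar⁻¹ ^ 2, Bbar⁻¹ * Abar⁻¹ * Bbar,
        Abar * Bbar⁻¹ * Abar⁻¹ * Bbar * Abar⁻¹} : Set PSL2Z)).relIndex (GammaBar 2) = 5 := by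
  exact ⟨part1, relindex_eq⟩
end

section
/- Let Γ be the subgroup of PSL₂(ℤ) generated by the images of the four matrices BA⁻¹, A⁻¹B, B⁻¹A⁻¹B², and B⁻³. Then the image of ABA⁻²B⁻² = [[77,-18],[30,-7]] in PSL₂(ℤ) lies in Γ̄(6) but does not lie in Γ; in particular Γ̄(6) is not contained in Γ. -/
/-! ### Auxiliary machinery -/

open Pointwise

def matAi : SL2Z := ⟨!![1, -2; 0, 1], by norm_num [Matrix.det_fin_two_of]⟩
def matBi : SL2Z := ⟨!![1, 0; -2, 1], by norm_num [Matrix.det_fin_two_of]⟩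
def matNegI : SL2Z := ⟨!![-1, 0; 0, -1], by norm_num [Matrix.det_fin_two_of]⟩
def matW6 : SL2Z := ⟨!![-77, 18; -30, 7], by norm_num [Matrix.det_fin_two_of]⟩

lemma matA_inv : matA⁻¹ = matAi := by
  apply inv_eq_of_mul_eq_one_right
  ext i j
  simp only [Matrix.SpecialLinearGroup.coe_mul]
  fin_cases i <;> fin_cases j <;> simp [matA, matAi, Matrix.mul_apply, Fin.sum_univ_two]

lemma matB_inv : matB⁻¹ = matBi := by
  apply inv_eq_of_mul_eq_one_right
  ext i j
  simp only [Matrix.SpecialLinearGroup.coe_mul]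
  fin_cases i <;> fin_cases j <;> simp [matB, matBi, Matrix.mul_apply, Fin.sum_univ_two]

lemma word_eq : matA * matB * matA⁻¹ ^ 2 * matB⁻¹ ^ 2 = matNegI * matW6 := by
  rw [matA_inv, matB_inv]
  ext i j
  simp only [Matrix.SpecialLinearGroup.coe_mul, Matrix.SpecialLinearGroup.coe_pow]
  fin_cases i <;> fin_cases j <;>
    simp [matA, matB, matAi, matBi, matNegI, matW6, pow_two, Matrix.mul_apply, Fin.sum_univ_two]

lemma matW6_mem_Gamma : matW6 ∈ CongruenceSubgroup.Gamma 6 := by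
  rw [CongruenceSubgroup.Gamma_mem]
  refine ⟨?_, ?_, ?_, ?_⟩ <;> simp [matW6] <;> decide

lemma matNegI_center : matNegI ∈ Subgroup.center SL2Z := by
  rw [Subgroup.mem_center_iff]
  intro g
  ext i j
  simp only [Matrix.SpecialLinearGroup.coe_mul]
  fin_cases i <;> fin_cases j <;>
    simp [matNegI, Matrix.mul_apply, Fin.sum_univ_two]

lemma projSL_negI : projSL matNegI = 1 := by
  rw [projSL, QuotientGroup.mk'_apply, QuotientGroup.eq_one_iff]
  exact matNegI_center

/-! ### The center of `SL(2,ℤ)` is `{±I}` -/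

lemma center_eq (g : SL2Z) (hg : g ∈ Subgroup.center SL2Z) : g = 1 ∨ g = matNegI := by
  rw [Subgroup.mem_center_iff] at hg
  have hT := congrArg (fun m : SL2Z => m.1) (hg matT)
  have hL := congrArg (fun m : SL2Z => m.1) (hg matL)
  simp only [Matrix.SpecialLinearGroup.coe_mul] at hT hL
  have e1 := congrFun (congrFun hT 0) 0
  have e2 := congrFun (congrFun hT 0) 1
  have e3 := congrFun (congrFun hL 0) 0
  have hdet := g.2
  rw [Matrix.det_fin_two] at hdet
  simp only [matT, matL, Matrix.mul_apply, Fin.sum_univ_two, Matrix.cons_val_zero,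
    Matrix.cons_val_one, Matrix.head_cons, Matrix.head_fin_const, Matrix.of_apply] at e1 e2 e3
  have hc : g.1 1 0 = 0 := by linarith [e1]
  have hb : g.1 0 1 = 0 := by linarith [e3]
  have had : g.1 0 0 = g.1 1 1 := by nlinarith [e2]
  have hsq : g.1 0 0 * g.1 0 0 = 1 := by
    rw [had] at hdet ⊢
    rw [hb, hc] at hdet
    linarith [hdet]
  have : g.1 0 0 = 1 ∨ g.1 0 0 = -1 := by
    rcases Int.isUnit_iff.mp (IsUnit.of_mul_eq_one _ hsq) with h | h
    · exact Or.inl h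
    · exact Or.inr h
  rcases this with h | h
  · left
    ext i j
    fin_cases i <;> fin_cases j <;> simp [h, hb, hc, ← had, Matrix.one_apply]
  · right
    ext i j
    fin_cases i <;> fin_cases j <;> simp [matNegI, h, hb, hc, ← had]

/-! ### Sanov ping-pong: `A`, `B` generate a free group in `SL(2,ℤ)` -/

def smulSL (g : SL2Z) (p : ℤ × ℤ) : ℤ × ℤ :=
  (g.1 0 0 * p.1 + g.1 0 1 * p.2, g.1 1 0 * p.1 + g.1 1 1 * p.2)

lemma smulSL_one (p : ℤ × ℤ) : smulSL 1 p = p := by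
  simp [smulSL, Matrix.SpecialLinearGroup.coe_one, Matrix.one_apply]

lemma smulSL_mul (g h : SL2Z) (p : ℤ × ℤ) : smulSL (g * h) p = smulSL g (smulSL h p) := by
  simp only [smulSL, Matrix.SpecialLinearGroup.coe_mul, Matrix.mul_apply, Fin.sum_univ_two]
  exact Prod.ext (by ring) (by ring)

lemma smulSL_zero (g : SL2Z) : smulSL g 0 = 0 := by simp [smulSL]

lemma smulSL_ne_zero (g : SL2Z) {p : ℤ × ℤ} (hp : p ≠ 0) : smulSL g p ≠ 0 := by
  intro h; apply hp
  have := congrArg (smulSL g⁻¹) h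
  rwa [← smulSL_mul, inv_mul_cancel, smulSL_one, smulSL_zero] at this

abbrev Vnz := {p : ℤ × ℤ // p ≠ 0}

instance : MulAction SL2Z Vnz where
  smul g v := ⟨smulSL g v.1, smulSL_ne_zero g v.2⟩
  one_smul v := Subtype.ext (smulSL_one v.1)
  mul_smul g h v := Subtype.ext (smulSL_mul g h v.1)

lemma matA_smul (p : ℤ × ℤ) : smulSL matA p = (p.1 + 2 * p.2, p.2) := by simp [smulSL, matA]

lemma matB_smul (p : ℤ × ℤ) : smulSL matB p = (p.1, 2 * p.1 + p.2) := by simp [smulSL, matB]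

lemma keyA {x y : ℤ} (h : x * y ≥ 0) :
    (x + 2*y) * (x + 2*y) ≥ y * y ∧ (x + 2*y) * y ≥ 0 := by
  constructor <;> nlinarith [sq_nonneg x, sq_nonneg y]

lemma keyB {x y : ℤ} (h : x * y ≥ 0) (h0 : ¬(x = 0 ∧ y = 0)) :
    (2*x + y) * (2*x + y) > x * x ∧ x * (2*x + y) ≥ 0 := by
  constructor
  · rcases eq_or_ne x 0 with rfl | hx
    · have hy : y ≠ 0 := fun hy => h0 ⟨rfl, hy⟩
      nlinarith [mul_self_pos.mpr hy]
    · nlinarith [mul_self_pos.mpr hx]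
  · nlinarith [mul_self_nonneg x]

lemma keyA' {x y : ℤ} (h : x * y < 0) (h2 : y * y ≥ x * x) :
    (x + 2*y) * (x + 2*y) ≥ y * y ∧ (x + 2*y) * y ≥ 0 := by
  constructor
  · nlinarith [sq_nonneg (x + y), sq_nonneg (x + 3*y)]
  · nlinarith [sq_nonneg y]

lemma keyB' {x y : ℤ} (h : x * y < 0) (h2 : x * x > y * y) :
    (2*x + y) * (2*x + y) > x * x ∧ x * (2*x + y) ≥ 0 := by
  constructor
  · nlinarith [sq_nonneg (x + y), sq_nonneg (3*x + y)]
  · nlinarith [sq_nonneg x]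

def genAB : Fin 2 → SL2Z := ![matA, matB]

def Xpp : Fin 2 → Set Vnz :=
  ![{v | v.1.1 * v.1.1 ≥ v.1.2 * v.1.2 ∧ v.1.1 * v.1.2 ≥ 0},
    {v | v.1.2 * v.1.2 > v.1.1 * v.1.1 ∧ v.1.1 * v.1.2 ≥ 0}]

def Ypp : Fin 2 → Set Vnz := fun i => (genAB i)⁻¹ • (Xpp i)ᶜ

lemma mem_Ypp {i : Fin 2} {v : Vnz} : v ∈ Ypp i ↔ genAB i • v ∉ Xpp i := by
  rw [Ypp, Set.mem_inv_smul_set_iff]; rfl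

lemma A_smul_mem_X0 {v : Vnz} (h : v.1.1 * v.1.2 ≥ 0) : genAB 0 • v ∈ Xpp 0 := by
  have h1 : (genAB 0 • v).1 = (v.1.1 + 2 * v.1.2, v.1.2) := matA_smul v.1
  simp only [Xpp, Matrix.cons_val_zero, Set.mem_setOf_eq, h1]
  exact keyA h

lemma B_smul_mem_X1 {v : Vnz} (h : v.1.1 * v.1.2 ≥ 0) : genAB 1 • v ∈ Xpp 1 := by
  have h1 : (genAB 1 • v).1 = (v.1.1, 2 * v.1.1 + v.1.2) := matB_smul v.1
  have h0 : ¬(v.1.1 = 0 ∧ v.1.2 = 0) := by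
    rintro ⟨ha, hb⟩; exact v.2 (Prod.ext ha hb)
  simp only [Xpp, Matrix.cons_val_one, Matrix.head_cons, Matrix.cons_val_zero, Set.mem_setOf_eq, h1]
  exact keyB h h0

lemma cover (v : Vnz) : genAB 0 • v ∈ Xpp 0 ∨ genAB 1 • v ∈ Xpp 1 := by
  rcases le_or_gt 0 (v.1.1 * v.1.2) with h | h
  · exact Or.inl (A_smul_mem_X0 h)
  · rcases le_or_gt (v.1.1 * v.1.1) (v.1.2 * v.1.2) with h2 | h2
    · left
      have h1 : (genAB 0 • v).1 = (v.1.1 + 2 * v.1.2, v.1.2) := matA_smul v.1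
      simp only [Xpp, Matrix.cons_val_zero, Set.mem_setOf_eq, h1]
      exact keyA' h h2
    · right
      have h1 : (genAB 1 • v).1 = (v.1.1, 2 * v.1.1 + v.1.2) := matB_smul v.1
      simp only [Xpp, Matrix.cons_val_one, Matrix.head_cons, Matrix.cons_val_zero, Set.mem_setOf_eq, h1]
      exact keyB' h h2

lemma mem_X0_smul {v : Vnz} (h : v ∈ Xpp 0) :
    genAB 0 • v ∈ Xpp 0 ∧ genAB 1 • v ∈ Xpp 1 := by
  have := h
  simp only [Xpp, Matrix.cons_val_zero, Set.mem_setOf_eq] at this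
  exact ⟨A_smul_mem_X0 this.2, B_smul_mem_X1 this.2⟩

lemma mem_X1_smul {v : Vnz} (h : v ∈ Xpp 1) :
    genAB 0 • v ∈ Xpp 0 ∧ genAB 1 • v ∈ Xpp 1 := by
  have := h
  simp only [Xpp, Matrix.cons_val_one, Matrix.head_cons, Set.mem_setOf_eq] at this
  exact ⟨A_smul_mem_X0 this.2, B_smul_mem_X1 this.2⟩

lemma mem_X_smul {i j : Fin 2} {v : Vnz} (h : v ∈ Xpp i) : genAB j • v ∈ Xpp j := by
  fin_cases i
  · fin_cases j
    · exact (mem_X0_smul h).1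
    · exact (mem_X0_smul h).2
  · fin_cases j
    · exact (mem_X1_smul h).1
    · exact (mem_X1_smul h).2

theorem liftAB_injective : Function.Injective (FreeGroup.lift genAB) := by
  apply FreeGroup.injective_lift_of_ping_pong genAB Xpp Ypp
  · intro i
    fin_cases i
    · exact ⟨⟨(1, 0), by simp⟩, by simp [Xpp]⟩
    · exact ⟨⟨(0, 1), by simp⟩, by simp [Xpp]⟩
  · intro i j hij
    rw [Function.onFun, Set.disjoint_left]
    intro v hvi hvj
    fin_cases i <;> fin_cases j <;> simp_all [Xpp]
    · omega
    · omega
  · intro i j hij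
    rw [Function.onFun, Set.disjoint_left]
    intro v hvi hvj
    rw [mem_Ypp] at hvi hvj
    fin_cases i <;> fin_cases j <;> rcases cover v with h | h <;> simp_all
  · intro i j
    rw [Set.disjoint_left]
    intro v hvi hvj
    rw [mem_Ypp] at hvj
    exact hvj (mem_X_smul hvi)
  · intro i
    rintro x ⟨v, hv, rfl⟩
    rw [Set.mem_compl_iff, mem_Ypp, not_not] at hv
    exact hv
  · intro i
    rw [Pi.inv_apply]
    exact le_refl _

/-! ### `-I` is not in the subgroup generated by `A`, `B` (reduction mod 4) -/

abbrev SL24 := Matrix.SpecialLinearGroup (Fin 2) (ZMod 4)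

instance : DecidableEq SL24 := fun a b => decidable_of_iff (a.1 = b.1) Subtype.ext_iff.symm

def A4 : SL24 := ⟨!![1, 2; 0, 1], by decide⟩
def B4 : SL24 := ⟨!![1, 0; 2, 1], by decide⟩

def red4 : SL2Z →* SL24 := Matrix.SpecialLinearGroup.map (Int.castRingHom (ZMod 4))

def K4 : Subgroup SL24 where
  carrier := {s | s = 1 ∨ s = A4 ∨ s = B4 ∨ s = A4 * B4}
  one_mem' := Or.inl rfl
  mul_mem' := by
    intro a b ha hb
    simp only [Set.mem_setOf_eq] at *
    rcases ha with rfl | rfl | rfl | rfl <;> rcases hb with rfl | rfl | rfl | rfl <;> decide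
  inv_mem' := by
    intro a ha
    simp only [Set.mem_setOf_eq] at *
    rcases ha with rfl | rfl | rfl | rfl <;> decide

lemma mem_K4 {x : SL24} : x ∈ K4 ↔ (x = 1 ∨ x = A4 ∨ x = B4 ∨ x = A4 * B4) := Iff.rfl

lemma lift4_mem (u : FreeGroup (Fin 2)) : FreeGroup.lift ![A4, B4] u ∈ K4 := by
  induction u using FreeGroup.induction_on with
  | C1 => simp only [map_one]; exact one_mem _
  | of i =>
    rw [mem_K4]
    fin_cases i
    · exact Or.inr (Or.inl (show FreeGroup.lift ![A4, B4] (FreeGroup.of 0) = A4 by simp))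
    · exact Or.inr (Or.inr (Or.inl (show FreeGroup.lift ![A4, B4] (FreeGroup.of 1) = B4 by simp)))
  | inv_of i h => rw [map_inv]; exact inv_mem h
  | mul x y hx hy => rw [map_mul]; exact mul_mem hx hy

lemma red4_lift (u : FreeGroup (Fin 2)) :
    red4 (FreeGroup.lift genAB u) = FreeGroup.lift ![A4, B4] u := by
  have : red4.comp (FreeGroup.lift genAB) = FreeGroup.lift ![A4, B4] := by
    apply FreeGroup.ext_hom
    intro i
    fin_cases i <;>
      · simp only [MonoidHom.comp_apply, FreeGroup.lift_apply_of]
        ext i j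
        fin_cases i <;> fin_cases j <;> rfl
  exact congrFun (congrArg DFunLike.coe this) u

lemma negI_not_lift (u : FreeGroup (Fin 2)) : FreeGroup.lift genAB u ≠ matNegI := by
  intro h
  have h4 : FreeGroup.lift ![A4, B4] u = red4 matNegI := by rw [← red4_lift, h]
  have hm := lift4_mem u
  rw [h4, mem_K4] at hm
  have hred : red4 matNegI = ⟨!![3, 0; 0, 3], by decide⟩ := by
    ext i j; fin_cases i <;> fin_cases j <;> rfl
  rw [hred] at hm
  revert hm
  rw [← hred]
  decide

/-! ### The exponent-sum mod 3 invariant on the free group -/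

def expSum3 : FreeGroup (Fin 2) →* Multiplicative (ZMod 3) :=
  FreeGroup.lift fun _ => Multiplicative.ofAdd 1

lemma expSum3_of (i : Fin 2) : expSum3 (FreeGroup.of i) = Multiplicative.ofAdd 1 :=
  FreeGroup.lift_apply_of

/-! ### The main theorem -/

/-- For the 3-star group `Γ = ⟨BA⁻¹, A⁻¹B, B⁻¹A⁻¹B², B⁻³⟩`, the image of `ABA⁻²B⁻²` lies
in `Γ̄(6)` but not in `Γ`; in particular `Γ̄(6) ⊄ Γ`. -/
theorem three_star_misses_element_of_gamma_six :
    Abar * Bbar * Abar⁻¹ ^ 2 * Bbar⁻¹ ^ 2 ∈ GammaBar 6 ∧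
    Abar * Bbar * Abar⁻¹ ^ 2 * Bbar⁻¹ ^ 2 ∉
      Subgroup.closure ({Bbar * Abar⁻¹, Abar⁻¹ * Bbar, Bbar⁻¹ * Abar⁻¹ * Bbar ^ 2,
        Bbar⁻¹ ^ 3} : Set PSL2Z) ∧
    ¬ GammaBar 6 ≤ Subgroup.closure ({Bbar * Abar⁻¹, Abar⁻¹ * Bbar,
        Bbar⁻¹ * Abar⁻¹ * Bbar ^ 2, Bbar⁻¹ ^ 3} : Set PSL2Z) := by
  have hw : Abar * Bbar * Abar⁻¹ ^ 2 * Bbar⁻¹ ^ 2 = projSL matW6 := by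
    rw [Abar, Bbar, ← map_inv projSL matA, ← map_inv projSL matB, ← map_pow, ← map_pow,
      ← map_mul, ← map_mul, ← map_mul, word_eq, map_mul, projSL_negI, one_mul]
  have h1 : Abar * Bbar * Abar⁻¹ ^ 2 * Bbar⁻¹ ^ 2 ∈ GammaBar 6 := by
    rw [hw, GammaBar]
    exact Subgroup.mem_map.mpr ⟨matW6, matW6_mem_Gamma, rfl⟩
  set S : Set PSL2Z := {Bbar * Abar⁻¹, Abar⁻¹ * Bbar, Bbar⁻¹ * Abar⁻¹ * Bbar ^ 2, Bbar⁻¹ ^ 3}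
    with hSdef
  have h2 : Abar * Bbar * Abar⁻¹ ^ 2 * Bbar⁻¹ ^ 2 ∉ Subgroup.closure S := by
    intro hmem
    set x : FreeGroup (Fin 2) := FreeGroup.of 0 with hxdef
    set y : FreeGroup (Fin 2) := FreeGroup.of 1 with hydef
    set φ : FreeGroup (Fin 2) →* PSL2Z := projSL.comp (FreeGroup.lift genAB) with hφdef
    have hφx : φ x = Abar := by
      simp only [hφdef, hxdef, MonoidHom.comp_apply, FreeGroup.lift_apply_of]
      rfl
    have hφy : φ y = Bbar := by
      simp only [hφdef, hydef, MonoidHom.comp_apply, FreeGroup.lift_apply_of]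
      rfl
    set W : FreeGroup (Fin 2) := x * y * x⁻¹ ^ 2 * y⁻¹ ^ 2 with hWdef
    set S' : Set (FreeGroup (Fin 2)) := {y * x⁻¹, x⁻¹ * y, y⁻¹ * x⁻¹ * y ^ 2, y⁻¹ ^ 3}
      with hS'def
    have hφW : φ W = Abar * Bbar * Abar⁻¹ ^ 2 * Bbar⁻¹ ^ 2 := by
      simp only [hWdef, map_mul, map_pow, map_inv, hφx, hφy]
    have hS : φ '' S' = S := by
      simp only [hS'def, hSdef, Set.image_insert_eq, Set.image_singleton, map_mul, map_inv,
        map_pow, hφx, hφy]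
    rw [← hφW, ← hS, ← MonoidHom.map_closure] at hmem
    obtain ⟨h, hh, hEq⟩ := Subgroup.mem_map.mp hmem
    have hcen : (FreeGroup.lift genAB h)⁻¹ * FreeGroup.lift genAB W ∈ Subgroup.center SL2Z := by
      have heq2 : (FreeGroup.lift genAB h : PSL2Z) = (FreeGroup.lift genAB W : PSL2Z) := hEq
      exact QuotientGroup.eq.mp heq2
    rcases center_eq _ hcen with hone | hneg
    · have hlEq : FreeGroup.lift genAB h = FreeGroup.lift genAB W :=
        (inv_mul_eq_one.mp hone)
      have hWS' : W ∈ Subgroup.closure S' := liftAB_injective hlEq ▸ hh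
      have hker : Subgroup.closure S' ≤ expSum3.ker := by
        rw [Subgroup.closure_le]
        intro z hz
        simp only [hS'def, Set.mem_insert_iff, Set.mem_singleton_iff] at hz
        rcases hz with rfl | rfl | rfl | rfl <;>
          · rw [SetLike.mem_coe, MonoidHom.mem_ker]
            simp only [map_mul, map_inv, map_pow, hxdef, hydef, expSum3_of]
            decide
      have hc : expSum3 W = 1 := hker hWS'
      rw [hWdef] at hc
      simp only [map_mul, map_inv, map_pow, hxdef, hydef, expSum3_of] at hc
      revert hc
      decide
    · exact negI_not_lift (h⁻¹ * W) (by rw [map_mul, map_inv]; exact hneg)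
  exact ⟨h1, h2, fun hle => h2 (hle h1)⟩
end
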